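/- arXiv:1202.5720 — 8 statements merged into one kernel-verified Lean document; each statement's English description precedes it below -/
import Mathlib

section
/- If there is a graph homomorphism from G to H and H is a cover graph, then G is a cover graph. -/
open SimpleGraph

/-- A graph is a *cover graph* if it is the underlying graph of the Hasse diagram of a
partially ordered set, i.e. adjacency coincides with the (symmetrized) covering relation. -/
def SimpleGraph.IsCoverGraph {V : Type*} (G : SimpleGraph V) : Prop :=
  ∃ p : PartialOrder V, ∀ a b : V,
    G.Adj a b ↔ (@CovBy V p.toPreorder.toLT a b ∨ @CovBy V p.toPreorder.toLT b a)

/-- The direct (tensor/categorical) product of two simple graphs. -/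
def SimpleGraph.tensorProd {α β : Type*} (G : SimpleGraph α) (H : SimpleGraph β) :
    SimpleGraph (α × β) where
  Adj x y := G.Adj x.1 y.1 ∧ H.Adj x.2 y.2
  symm := ⟨fun _ _ h => ⟨h.1.symm, h.2.symm⟩⟩
  loopless := ⟨fun _ h => G.loopless.irrefl _ h.1⟩

/-- The generalized Mycielskian `M_m(G)`: levels `0,…,m` (each a copy of `V`), the edges of `G`
on level `0`, edges between consecutive levels induced by the edges of `G`, and a root `none`
adjacent to all of level `m`. -/
def SimpleGraph.Myc {V : Type*} (m : ℕ) (G : SimpleGraph V) :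
    SimpleGraph (Option (Fin (m + 1) × V)) where
  Adj x y :=
    match x, y with
    | some (i, j), some (k, l) =>
        G.Adj j l ∧ ((i.val = 0 ∧ k.val = 0) ∨ i.val + 1 = k.val ∨ k.val + 1 = i.val)
    | some (i, _), none => i.val = m
    | none, some (k, _) => k.val = m
    | none, none => False
  symm := by
    constructor
    rintro (_ | ⟨i, j⟩) (_ | ⟨k, l⟩) h
    · exact h
    · exact h
    · exact h
    · exact ⟨h.1.symm, by omega⟩
  loopless := by
    constructor
    rintro (_ | ⟨i, j⟩) h
    · exact h
    · exact G.loopless.irrefl j h.1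


/-- If there is a graph homomorphism from `G` to `H` and `H` is a cover graph,
then `G` is a cover graph. -/
theorem isCoverGraph_of_hom {α β : Type*} [Fintype α] [Fintype β]
    (G : SimpleGraph α) (H : SimpleGraph β) (f : G →g H) (hH : H.IsCoverGraph) :
    G.IsCoverGraph := by
  obtain ⟨p, hp⟩ := hH
  letI : PartialOrder β := p
  classical
  set r : α → α → Prop := fun a b => G.Adj a b ∧ (f a) ⋖ (f b) with hr
  set T : α → α → Prop := Relation.TransGen r with hT
  have hmono : ∀ a b, T a b → f a < f b := by
    intro a b h
    induction h with
    | single h => exact h.2.1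
    | tail _ h ih => exact lt_trans ih h.2.1
  have hirr : ∀ a, ¬ T a a := fun a h => lt_irrefl _ (hmono a a h)
  have htrans : ∀ a b c, T a b → T b c → T a c := fun a b c h1 h2 => h1.trans h2
  refine ⟨{ le := fun a b => a = b ∨ T a b
            lt := T
            le_refl := fun a => Or.inl rfl
            le_trans := by
              rintro a b c (rfl | h1) (rfl | h2)
              · exact Or.inl rfl
              · exact Or.inr h2
              · exact Or.inr h1
              · exact Or.inr (htrans _ _ _ h1 h2)
            lt_iff_le_not_ge := by
              intro a b
              constructor
              · intro h
                refine ⟨Or.inr h, ?_⟩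
                rintro (h2 | h2)
                · exact hirr b (h2 ▸ h)
                · exact hirr a (htrans a b a h h2)
              · rintro ⟨(rfl | h1), h2⟩
                · exact absurd (Or.inl rfl) h2
                · exact h1
            le_antisymm := by
              rintro a b (rfl | h1) (h2 | h2)
              · rfl
              · rfl
              · exact h2.symm
              · exact absurd (htrans a b a h1 h2) (hirr a) }, ?_⟩
  intro a b
  constructor
  · intro hab
    rcases (hp (f a) (f b)).1 (f.map_adj hab) with hc | hc
    · left
      refine ⟨Relation.TransGen.single ⟨hab, hc⟩, ?_⟩
      intro c h1 h2
      exact hc.2 (hmono a c h1) (hmono c b h2)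
    · right
      refine ⟨Relation.TransGen.single ⟨hab.symm, hc⟩, ?_⟩
      intro c h1 h2
      exact hc.2 (hmono b c h1) (hmono c a h2)
  · rintro (⟨h1, h2⟩ | ⟨h1, h2⟩)
    · cases h1 with
      | single h => exact h.1
      | tail h1 h => exact absurd (Relation.TransGen.single h) (h2 h1)
    · cases h1 with
      | single h => exact h.1.symm
      | tail h1 h => exact absurd (Relation.TransGen.single h) (h2 h1)
end

section
/- For n ≥ 3 and m ≥ 1, the generalized Mycielskian M_m(C_n) of the n-cycle is a cover graph if and only if n is even. -/
open SimpleGraph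

/-! ### Auxiliary material -/

/-- The edge of the cycle graph from `j` to `j+1`. -/
private lemma cadj {k : ℕ} (j : Fin (k + 2)) : (cycleGraph (k + 2)).Adj j (j + 1) :=
  cycleGraph_adj.mpr (Or.inr (add_sub_cancel_left j 1))

private lemma shift_add_sum {N : ℕ} [NeZero N] (c : Fin N) (g : Fin N → ℤ) :
    (∑ j, g (j + c)) = ∑ j, g j :=
  Fintype.sum_equiv (Equiv.addRight c) _ _ (fun _ => rfl)

private lemma shift_sub_sum {N : ℕ} [NeZero N] (c : Fin N) (g : Fin N → ℤ) :
    (∑ j, g (j - c)) = ∑ j, g j :=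
  Fintype.sum_equiv (Equiv.subRight c) _ _ (fun _ => rfl)

/-! ### The sign of a covering edge -/

open Classical in
private noncomputable def chi {W : Type*} [PartialOrder W] (x y : W) : ℤ :=
  if x ⋖ y then 1 else -1

private lemma chi_eq_one {W : Type*} [PartialOrder W] {x y : W} (h : x ⋖ y) : chi x y = 1 := by
  unfold chi; exact if_pos h

private lemma chi_eq_neg {W : Type*} [PartialOrder W] {x y : W} (h : y ⋖ x) : chi x y = -1 := by
  unfold chi
  exact if_neg (fun h' => absurd (h'.lt.trans h.lt) (lt_irrefl x))

private lemma chi_antisymm {W : Type*} [PartialOrder W] {G : SimpleGraph W}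
    (hG : ∀ a b : W, G.Adj a b ↔ (a ⋖ b ∨ b ⋖ a)) {x y : W} (h : G.Adj x y) :
    chi y x = - chi x y := by
  rcases (hG _ _).1 h with h' | h'
  · rw [chi_eq_neg h', chi_eq_one h']
  · rw [chi_eq_one h', chi_eq_neg h']; norm_num

/-- In a cover order, the signs around any 4-cycle of the graph sum to zero. -/
private lemma chi_square {W : Type*} [PartialOrder W] {G : SimpleGraph W}
    (hG : ∀ a b : W, G.Adj a b ↔ (a ⋖ b ∨ b ⋖ a)) {x1 x2 x3 x4 : W}
    (h12 : G.Adj x1 x2) (h23 : G.Adj x2 x3) (h34 : G.Adj x3 x4) (h41 : G.Adj x4 x1) :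
    chi x1 x2 + chi x2 x3 + chi x3 x4 + chi x4 x1 = 0 := by
  rcases (hG _ _).1 h12 with h1 | h1 <;> rcases (hG _ _).1 h23 with h2 | h2 <;>
    rcases (hG _ _).1 h34 with h3 | h3 <;> rcases (hG _ _).1 h41 with h4 | h4
  · exact absurd (((h1.lt.trans h2.lt).trans h3.lt).trans h4.lt) (lt_irrefl _)
  · exact (h4.2 h1.lt (h2.lt.trans h3.lt)).elim
  · exact (h3.2 h4.lt (h1.lt.trans h2.lt)).elim
  · rw [chi_eq_one h1, chi_eq_one h2, chi_eq_neg h3, chi_eq_neg h4]; norm_num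
  · exact (h2.2 h3.lt (h4.lt.trans h1.lt)).elim
  · rw [chi_eq_one h1, chi_eq_neg h2, chi_eq_one h3, chi_eq_neg h4]; norm_num
  · rw [chi_eq_one h1, chi_eq_neg h2, chi_eq_neg h3, chi_eq_one h4]; norm_num
  · exact (h1.2 h4.lt (h3.lt.trans h2.lt)).elim
  · exact (h1.2 h2.lt (h3.lt.trans h4.lt)).elim
  · rw [chi_eq_neg h1, chi_eq_one h2, chi_eq_one h3, chi_eq_neg h4]; norm_num
  · rw [chi_eq_neg h1, chi_eq_one h2, chi_eq_neg h3, chi_eq_one h4]; norm_num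
  · exact (h2.2 h1.lt (h4.lt.trans h3.lt)).elim
  · rw [chi_eq_neg h1, chi_eq_neg h2, chi_eq_one h3, chi_eq_one h4]; norm_num
  · exact (h3.2 h2.lt (h1.lt.trans h4.lt)).elim
  · exact (h4.2 h3.lt (h2.lt.trans h1.lt)).elim
  · exact absurd (((h4.lt.trans h3.lt).trans h2.lt).trans h1.lt) (lt_irrefl _)

/-! ### Vertices of the Mycielskian of a cycle, by numeric level -/

open Fin.NatCast in
private def wv (m' : ℕ) {k : ℕ} (i : ℕ) (j : Fin (k + 2)) :
    Option (Fin (m' + 1 + 1) × Fin (k + 2)) :=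
  some ((i : Fin (m' + 1 + 1)), j)

private lemma adj_up {m' k : ℕ} {a : ℕ} (ha : a + 1 ≤ m' + 1) {j l : Fin (k + 2)}
    (hjl : (cycleGraph (k + 2)).Adj j l) :
    (SimpleGraph.Myc (m' + 1) (cycleGraph (k + 2))).Adj (wv m' a j) (wv m' (a + 1) l) :=
  ⟨hjl, Or.inr (Or.inl (by
    rw [Fin.val_cast_of_lt (by omega : a < m' + 1 + 1),
      Fin.val_cast_of_lt (by omega : a + 1 < m' + 1 + 1)]))⟩

private lemma adj_down {m' k : ℕ} {a : ℕ} (ha : a + 1 ≤ m' + 1) {j l : Fin (k + 2)}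
    (hjl : (cycleGraph (k + 2)).Adj j l) :
    (SimpleGraph.Myc (m' + 1) (cycleGraph (k + 2))).Adj (wv m' (a + 1) j) (wv m' a l) :=
  ⟨hjl, Or.inr (Or.inr (by
    rw [Fin.val_cast_of_lt (by omega : a < m' + 1 + 1),
      Fin.val_cast_of_lt (by omega : a + 1 < m' + 1 + 1)]))⟩

private lemma adj_zero {m' k : ℕ} {j l : Fin (k + 2)} (hjl : (cycleGraph (k + 2)).Adj j l) :
    (SimpleGraph.Myc (m' + 1) (cycleGraph (k + 2))).Adj (wv m' 0 j) (wv m' 0 l) :=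
  ⟨hjl, Or.inl ⟨Fin.val_cast_of_lt (by omega), Fin.val_cast_of_lt (by omega)⟩⟩

private lemma adj_top {m' k : ℕ} (j : Fin (k + 2)) :
    (SimpleGraph.Myc (m' + 1) (cycleGraph (k + 2))).Adj (wv m' (m' + 1) j) none :=
  Fin.val_cast_of_lt (by omega)

private lemma adj_top' {m' k : ℕ} (j : Fin (k + 2)) :
    (SimpleGraph.Myc (m' + 1) (cycleGraph (k + 2))).Adj none (wv m' (m' + 1) j) :=
  Fin.val_cast_of_lt (by omega)

/-- The signed flow of the zig-zag 2n-cycle between levels `a` and `a+1`. -/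
private noncomputable def SS (m' : ℕ) {k : ℕ}
    [PartialOrder (Option (Fin (m' + 1 + 1) × Fin (k + 2)))] (a : ℕ) : ℤ :=
  ∑ j : Fin (k + 2),
    (chi (wv m' a j) (wv m' (a + 1) (j + 1)) + chi (wv m' (a + 1) j) (wv m' a (j + 1)))

section OddDirection

variable {m' k : ℕ} [po : PartialOrder (Option (Fin (m' + 1 + 1) × Fin (k + 2)))]

/-- The cover-graph hypothesis, with the covering relation of `po`. -/
private def CovHyp (po : PartialOrder (Option (Fin (m' + 1 + 1) × Fin (k + 2)))) : Prop :=
  ∀ a b : Option (Fin (m' + 1 + 1) × Fin (k + 2)),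
    (SimpleGraph.Myc (m' + 1) (cycleGraph (k + 2))).Adj a b ↔
      (@CovBy _ po.toPreorder.toLT a b ∨ @CovBy _ po.toPreorder.toLT b a)

private lemma SS_zero (hp : CovHyp po) :
    SS m' (k := k) 0 = 2 * ∑ j : Fin (k + 2), chi (wv m' 0 j) (wv m' 0 (j + 1)) := by
  have e1 : ∀ j : Fin (k + 2), (j - 1) + 1 = j := fun j => sub_add_cancel j 1
  have hsq : ∀ j : Fin (k + 2),
      chi (wv m' 0 (j - 1)) (wv m' 0 j) + chi (wv m' 0 j) (wv m' 0 (j + 1))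
        + chi (wv m' 0 (j + 1)) (wv m' 1 j) + chi (wv m' 1 j) (wv m' 0 (j - 1)) = 0 := by
    intro j
    have a1 : (SimpleGraph.Myc (m' + 1) (cycleGraph (k + 2))).Adj (wv m' 0 (j - 1)) (wv m' 0 j) := by
      have := adj_zero (m' := m') (cadj (j - 1))
      rwa [e1] at this
    have a2 := adj_zero (m' := m') (cadj j)
    have a3 : (SimpleGraph.Myc (m' + 1) (cycleGraph (k + 2))).Adj (wv m' 0 (j + 1)) (wv m' 1 j) :=
      adj_up (by omega) (cadj j).symm
    have a4 : (SimpleGraph.Myc (m' + 1) (cycleGraph (k + 2))).Adj (wv m' 1 j) (wv m' 0 (j - 1)) := by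
      have hc : (cycleGraph (k + 2)).Adj j (j - 1) := by
        have := (cadj (j - 1)).symm
        rwa [e1] at this
      exact adj_down (by omega) hc
    exact chi_square hp a1 a2 a3 a4
  have hsq2 : ∀ j : Fin (k + 2),
      chi (wv m' 0 (j - 1)) (wv m' 0 j) + chi (wv m' 0 j) (wv m' 0 (j + 1))
        - chi (wv m' 1 j) (wv m' 0 (j + 1)) - chi (wv m' 0 (j - 1)) (wv m' 1 j) = 0 := by
    intro j
    have h1 := hsq j
    have h2 : chi (wv m' 0 (j + 1)) (wv m' 1 j) = - chi (wv m' 1 j) (wv m' 0 (j + 1)) :=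
      chi_antisymm hp (adj_down (by omega) (cadj j))
    have h3 : chi (wv m' 1 j) (wv m' 0 (j - 1)) = - chi (wv m' 0 (j - 1)) (wv m' 1 j) := by
      refine chi_antisymm hp ?_
      have := adj_up (m' := m') (a := 0) (by omega) (cadj (j - 1))
      rwa [e1] at this
    linarith
  have hsum0 : (∑ j : Fin (k + 2),
      (chi (wv m' 0 (j - 1)) (wv m' 0 j) + chi (wv m' 0 j) (wv m' 0 (j + 1))
        - chi (wv m' 1 j) (wv m' 0 (j + 1)) - chi (wv m' 0 (j - 1)) (wv m' 1 j))) = 0 :=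
    Finset.sum_eq_zero fun j _ => hsq2 j
  rw [Finset.sum_sub_distrib, Finset.sum_sub_distrib, Finset.sum_add_distrib] at hsum0
  have hA : (∑ j : Fin (k + 2), chi (wv m' 0 (j - 1)) (wv m' 0 j))
      = ∑ j : Fin (k + 2), chi (wv m' 0 j) (wv m' 0 (j + 1)) := by
    rw [← shift_sub_sum (1 : Fin (k + 2)) (fun j => chi (wv m' 0 j) (wv m' 0 (j + 1)))]
    exact Finset.sum_congr rfl fun j _ => by rw [e1 j]
  have hD : (∑ j : Fin (k + 2), chi (wv m' 0 (j - 1)) (wv m' 1 j))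
      = ∑ j : Fin (k + 2), chi (wv m' 0 j) (wv m' 1 (j + 1)) := by
    rw [← shift_sub_sum (1 : Fin (k + 2)) (fun j => chi (wv m' 0 j) (wv m' 1 (j + 1)))]
    exact Finset.sum_congr rfl fun j _ => by rw [e1 j]
  rw [hA, hD] at hsum0
  show (∑ j : Fin (k + 2),
      (chi (wv m' 0 j) (wv m' 1 (j + 1)) + chi (wv m' 1 j) (wv m' 0 (j + 1))))
    = 2 * ∑ j : Fin (k + 2), chi (wv m' 0 j) (wv m' 0 (j + 1))
  rw [Finset.sum_add_distrib]
  linarith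

private lemma SS_step (hp : CovHyp po) {a : ℕ} (ha : a + 2 ≤ m' + 1) :
    SS m' (k := k) (a + 1) = SS m' (k := k) a := by
  have e1 : ∀ j : Fin (k + 2), (j - 1) + 1 = j := fun j => sub_add_cancel j 1
  have hsq : ∀ j : Fin (k + 2),
      chi (wv m' a j) (wv m' (a + 1) (j + 1))
        + chi (wv m' (a + 1) (j + 1)) (wv m' (a + 1 + 1) j)
        + chi (wv m' (a + 1 + 1) j) (wv m' (a + 1) (j - 1))
        + chi (wv m' (a + 1) (j - 1)) (wv m' a j) = 0 := by
    intro j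
    have a1 : (SimpleGraph.Myc (m' + 1) (cycleGraph (k + 2))).Adj
        (wv m' a j) (wv m' (a + 1) (j + 1)) := adj_up (by omega) (cadj j)
    have a2 : (SimpleGraph.Myc (m' + 1) (cycleGraph (k + 2))).Adj
        (wv m' (a + 1) (j + 1)) (wv m' (a + 1 + 1) j) :=
      adj_up (a := a + 1) (by omega) (cadj j).symm
    have a3 : (SimpleGraph.Myc (m' + 1) (cycleGraph (k + 2))).Adj
        (wv m' (a + 1 + 1) j) (wv m' (a + 1) (j - 1)) := by
      have hc : (cycleGraph (k + 2)).Adj j (j - 1) := by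
        have := (cadj (j - 1)).symm
        rwa [e1] at this
      exact adj_down (a := a + 1) (by omega) hc
    have a4 : (SimpleGraph.Myc (m' + 1) (cycleGraph (k + 2))).Adj
        (wv m' (a + 1) (j - 1)) (wv m' a j) := by
      have hc : (cycleGraph (k + 2)).Adj (j - 1) j := by
        have := cadj (j - 1)
        rwa [e1] at this
      exact adj_down (a := a) (by omega) hc
    exact chi_square hp a1 a2 a3 a4
  have hsq2 : ∀ j : Fin (k + 2),
      chi (wv m' a j) (wv m' (a + 1) (j + 1))
        - chi (wv m' (a + 1 + 1) j) (wv m' (a + 1) (j + 1))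
        - chi (wv m' (a + 1) (j - 1)) (wv m' (a + 1 + 1) j)
        + chi (wv m' (a + 1) (j - 1)) (wv m' a j) = 0 := by
    intro j
    have h1 := hsq j
    have h2 : chi (wv m' (a + 1) (j + 1)) (wv m' (a + 1 + 1) j)
        = - chi (wv m' (a + 1 + 1) j) (wv m' (a + 1) (j + 1)) :=
      chi_antisymm hp (adj_down (a := a + 1) (by omega) (cadj j))
    have h3 : chi (wv m' (a + 1 + 1) j) (wv m' (a + 1) (j - 1))
        = - chi (wv m' (a + 1) (j - 1)) (wv m' (a + 1 + 1) j) := by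
      refine chi_antisymm hp ?_
      have := adj_up (m' := m') (a := a + 1) (by omega) (cadj (j - 1))
      rwa [e1] at this
    linarith
  have hsum0 : (∑ j : Fin (k + 2),
      (chi (wv m' a j) (wv m' (a + 1) (j + 1))
        - chi (wv m' (a + 1 + 1) j) (wv m' (a + 1) (j + 1))
        - chi (wv m' (a + 1) (j - 1)) (wv m' (a + 1 + 1) j)
        + chi (wv m' (a + 1) (j - 1)) (wv m' a j))) = 0 :=
    Finset.sum_eq_zero fun j _ => hsq2 j
  rw [Finset.sum_add_distrib, Finset.sum_sub_distrib, Finset.sum_sub_distrib] at hsum0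
  have hC : (∑ j : Fin (k + 2), chi (wv m' (a + 1) (j - 1)) (wv m' (a + 1 + 1) j))
      = ∑ j : Fin (k + 2), chi (wv m' (a + 1) j) (wv m' (a + 1 + 1) (j + 1)) := by
    rw [← shift_sub_sum (1 : Fin (k + 2))
      (fun j => chi (wv m' (a + 1) j) (wv m' (a + 1 + 1) (j + 1)))]
    exact Finset.sum_congr rfl fun j _ => by rw [e1 j]
  have hD : (∑ j : Fin (k + 2), chi (wv m' (a + 1) (j - 1)) (wv m' a j))
      = ∑ j : Fin (k + 2), chi (wv m' (a + 1) j) (wv m' a (j + 1)) := by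
    rw [← shift_sub_sum (1 : Fin (k + 2)) (fun j => chi (wv m' (a + 1) j) (wv m' a (j + 1)))]
    exact Finset.sum_congr rfl fun j _ => by rw [e1 j]
  rw [hC, hD] at hsum0
  show (∑ j : Fin (k + 2),
      (chi (wv m' (a + 1) j) (wv m' (a + 1 + 1) (j + 1))
        + chi (wv m' (a + 1 + 1) j) (wv m' (a + 1) (j + 1))))
    = ∑ j : Fin (k + 2),
      (chi (wv m' a j) (wv m' (a + 1) (j + 1)) + chi (wv m' (a + 1) j) (wv m' a (j + 1)))
  rw [Finset.sum_add_distrib, Finset.sum_add_distrib]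
  linarith

private lemma SS_top (hp : CovHyp po) : SS m' (k := k) m' = 0 := by
  have hsq : ∀ j : Fin (k + 2),
      chi (none : Option (Fin (m' + 1 + 1) × Fin (k + 2))) (wv m' (m' + 1) j)
        + chi (wv m' (m' + 1) j) (wv m' m' (j + 1))
        + chi (wv m' m' (j + 1)) (wv m' (m' + 1) (j + 1 + 1))
        + chi (wv m' (m' + 1) (j + 1 + 1)) none = 0 := by
    intro j
    exact chi_square hp (adj_top' j) (adj_down (a := m') (le_refl _) (cadj j))
      (adj_up (a := m') (le_refl _) (cadj (j + 1))) (adj_top (j + 1 + 1))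
  have hsq2 : ∀ j : Fin (k + 2),
      chi (none : Option (Fin (m' + 1 + 1) × Fin (k + 2))) (wv m' (m' + 1) j)
        + chi (wv m' (m' + 1) j) (wv m' m' (j + 1))
        + chi (wv m' m' (j + 1)) (wv m' (m' + 1) (j + 1 + 1))
        - chi (none : Option (Fin (m' + 1 + 1) × Fin (k + 2))) (wv m' (m' + 1) (j + 1 + 1))
        = 0 := by
    intro j
    have h1 := hsq j
    have h2 : chi (wv m' (m' + 1) (j + 1 + 1)) (none : Option (Fin (m' + 1 + 1) × Fin (k + 2)))
        = - chi (none : Option (Fin (m' + 1 + 1) × Fin (k + 2))) (wv m' (m' + 1) (j + 1 + 1)) :=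
      chi_antisymm hp (adj_top' (j + 1 + 1))
    linarith
  have hsum0 : (∑ j : Fin (k + 2),
      (chi (none : Option (Fin (m' + 1 + 1) × Fin (k + 2))) (wv m' (m' + 1) j)
        + chi (wv m' (m' + 1) j) (wv m' m' (j + 1))
        + chi (wv m' m' (j + 1)) (wv m' (m' + 1) (j + 1 + 1))
        - chi (none : Option (Fin (m' + 1 + 1) × Fin (k + 2))) (wv m' (m' + 1) (j + 1 + 1))))
      = 0 := Finset.sum_eq_zero fun j _ => hsq2 j
  rw [Finset.sum_sub_distrib, Finset.sum_add_distrib, Finset.sum_add_distrib] at hsum0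
  have hU : (∑ j : Fin (k + 2),
      chi (none : Option (Fin (m' + 1 + 1) × Fin (k + 2))) (wv m' (m' + 1) (j + 1 + 1)))
      = ∑ j : Fin (k + 2),
        chi (none : Option (Fin (m' + 1 + 1) × Fin (k + 2))) (wv m' (m' + 1) j) := by
    rw [← shift_add_sum (2 : Fin (k + 2))
      (fun j => chi (none : Option (Fin (m' + 1 + 1) × Fin (k + 2))) (wv m' (m' + 1) j))]
    exact Finset.sum_congr rfl fun j _ =>
      congrArg (fun z => chi (none : Option (Fin (m' + 1 + 1) × Fin (k + 2)))
        (wv m' (m' + 1) z)) (by rw [add_assoc]; exact congrArg (j + ·) (open Fin.NatCast in one_add_one_eq_two (R := Fin (k + 2))))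
  have hC : (∑ j : Fin (k + 2), chi (wv m' m' (j + 1)) (wv m' (m' + 1) (j + 1 + 1)))
      = ∑ j : Fin (k + 2), chi (wv m' m' j) (wv m' (m' + 1) (j + 1)) :=
    shift_add_sum (1 : Fin (k + 2)) (fun j => chi (wv m' m' j) (wv m' (m' + 1) (j + 1)))
  rw [hU, hC] at hsum0
  show (∑ j : Fin (k + 2),
      (chi (wv m' m' j) (wv m' (m' + 1) (j + 1)) + chi (wv m' (m' + 1) j) (wv m' m' (j + 1))))
    = 0
  rw [Finset.sum_add_distrib]
  linarith

end OddDirection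

private lemma not_cover_of_odd (n m : ℕ) (hn : 3 ≤ n) (hm : 1 ≤ m) (hodd : ¬ Even n) :
    ¬ (SimpleGraph.Myc m (cycleGraph n)).IsCoverGraph := by
  obtain ⟨k, rfl⟩ : ∃ k, n = k + 2 := ⟨n - 2, by omega⟩
  obtain ⟨m', rfl⟩ : ∃ m', m = m' + 1 := ⟨m - 1, by omega⟩
  rintro ⟨p, hp⟩
  have hp' : CovHyp (m' := m') (k := k) p := hp
  have L4 : ∀ a, a ≤ m' → @SS m' k p a = @SS m' k p 0 := by
    intro a
    induction a with
    | zero => intro _; rfl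
    | succ b ih =>
      intro hb
      rw [SS_step hp' (by omega), ih (by omega)]
  have h0 := SS_zero hp'
  have htop := SS_top hp'
  have hCC : (∑ j : Fin (k + 2), @chi _ p (wv m' 0 j) (wv m' 0 (j + 1))) = 0 := by
    have hm' := L4 m' (le_refl _)
    rw [htop] at hm'
    have h0' : @SS m' k p 0
        = 2 * ∑ j : Fin (k + 2), @chi _ p (wv m' 0 j) (wv m' 0 (j + 1)) := h0
    linarith
  have hone : ∀ j : Fin (k + 2),
      ((@chi _ p (wv m' 0 j) (wv m' 0 (j + 1)) : ℤ) : ZMod 2) = 1 := by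
    intro j
    rcases (hp' _ _).1 (adj_zero (cadj j)) with h | h
    · rw [chi_eq_one h]; rfl
    · rw [chi_eq_neg h]; decide
  have hcast : ((∑ j : Fin (k + 2), @chi _ p (wv m' 0 j) (wv m' 0 (j + 1)) : ℤ) : ZMod 2)
      = 0 := by
    rw [hCC]; rfl
  rw [Int.cast_sum, Finset.sum_congr rfl (fun j _ => hone j), Finset.sum_const,
    Finset.card_univ, Fintype.card_fin, nsmul_eq_mul, mul_one] at hcast
  rw [← ZMod.natCast_mod, Nat.not_even_iff.mp hodd] at hcast
  exact absurd hcast (by decide)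

/-! ### The even case: an explicit cover order -/

private lemma parity_flip {N x : ℕ} (hN : Even N) (hx : x < N) :
    (Even ((x + 1) % N) ↔ ¬ Even x) := by
  rcases Nat.lt_or_ge (x + 1) N with h | h
  · rw [Nat.mod_eq_of_lt h]
    exact Nat.even_add_one
  · have hxN : x + 1 = N := by omega
    have hx1 : Even (x + 1) := by rw [hxN]; exact hN
    rw [hxN, Nat.mod_self]
    simp [Nat.even_add_one.mp hx1]

private lemma cyc_parity {k : ℕ} (he : Even (k + 2)) {j l : Fin (k + 2)}
    (h : (cycleGraph (k + 2)).Adj j l) : (Even j.val ↔ ¬ Even l.val) := by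
  rw [cycleGraph_adj] at h
  have hval : l.val = (j.val + 1) % (k + 2) ∨ j.val = (l.val + 1) % (k + 2) := by
    rcases h with h | h
    · right
      have hj : j = l + 1 := by
        rw [sub_eq_iff_eq_add] at h
        rw [h]; exact add_comm 1 l
      rw [hj, Fin.val_add, Fin.val_one]
    · left
      have hl : l = j + 1 := by
        rw [sub_eq_iff_eq_add] at h
        rw [h]; exact add_comm 1 j
      rw [hl, Fin.val_add, Fin.val_one]
  rcases hval with hv | hv
  · rw [hv, parity_flip he j.isLt]
    simp [not_not]
  · rw [hv, parity_flip he l.isLt]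

/-- The strict order used to realize the even Mycielskian as a cover graph:
each edge is oriented from its even endpoint to its odd endpoint, and the root is on top. -/
private def bslt (m k : ℕ) (a b : Option (Fin (m + 1) × Fin (k + 2))) : Prop :=
  match a, b with
  | some (i, j), some (x, l) =>
      (SimpleGraph.Myc m (cycleGraph (k + 2))).Adj (some (i, j)) (some (x, l)) ∧ Even j.val
  | some (i, j), none => i.val = m ∨ (i.val + 1 = m ∧ Even j.val)
  | none, _ => False

private lemma bslt_irrefl {m k : ℕ} : ∀ a, ¬ bslt m k a a := by
  rintro (_ | ⟨i, j⟩) h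
  · exact h
  · exact SimpleGraph.irrefl _ h.1

private lemma bslt_asymm {m k : ℕ} (he : Even (k + 2)) :
    ∀ {a b}, bslt m k a b → bslt m k b a → False := by
  rintro (_ | ⟨i, j⟩) (_ | ⟨x, l⟩) h1 h2
  · exact h1
  · exact h1
  · exact h2
  · exact (cyc_parity he h1.1.1).mp h1.2 h2.2

private lemma bslt_trans {m k : ℕ} (hm : 1 ≤ m) (he : Even (k + 2)) :
    ∀ {a b c}, bslt m k a b → bslt m k b c → bslt m k a c := by
  rintro (_ | ⟨i, j⟩) (_ | ⟨x, l⟩) (_ | ⟨y, r⟩) h1 h2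
  all_goals try exact h1.elim
  all_goals try exact h2.elim
  · -- a, b some; c = none
    obtain ⟨⟨hcyc, hcond⟩, hj⟩ := h1
    have hlodd : ¬ Even l.val := (cyc_parity he hcyc).mp hj
    rcases h2 with hx | ⟨_, hl⟩
    · rcases hcond with ⟨h0a, h0b⟩ | hh | hh
      · exfalso; omega
      · exact Or.inr ⟨by omega, hj⟩
      · exfalso; have := i.isLt; omega
    · exact (hlodd hl).elim
  · -- all some
    obtain ⟨⟨hcyc, _⟩, hj⟩ := h1
    exact ((cyc_parity he hcyc).mp hj h2.2).elim

private def bOrder (m k : ℕ) (hm : 1 ≤ m) (he : Even (k + 2)) :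
    PartialOrder (Option (Fin (m + 1) × Fin (k + 2))) where
  le a b := a = b ∨ bslt m k a b
  lt a b := bslt m k a b
  le_refl a := Or.inl rfl
  le_trans a b c hab hbc := by
    rcases hab with rfl | hab
    · exact hbc
    rcases hbc with rfl | hbc
    · exact Or.inr hab
    · exact Or.inr (bslt_trans hm he hab hbc)
  lt_iff_le_not_ge a b := by
    constructor
    · intro h
      refine ⟨Or.inr h, ?_⟩
      rintro (rfl | h')
      · exact bslt_irrefl _ h
      · exact bslt_asymm he h h'
    · rintro ⟨rfl | h, hn⟩
      · exact absurd (Or.inl rfl) hn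
      · exact h
  le_antisymm a b hab hba := by
    rcases hab with rfl | hab
    · rfl
    rcases hba with rfl | hba
    · rfl
    · exact (bslt_asymm he hab hba).elim

private lemma cover_of_even (n m : ℕ) (hn : 3 ≤ n) (hm : 1 ≤ m) (he : Even n) :
    (SimpleGraph.Myc m (cycleGraph n)).IsCoverGraph := by
  obtain ⟨k, rfl⟩ : ∃ k, n = k + 2 := ⟨n - 2, by omega⟩
  refine ⟨bOrder m k hm he, ?_⟩
  have covIff : ∀ a b, (@CovBy _ (bOrder m k hm he).toPreorder.toLT a b) ↔
      (bslt m k a b ∧ ∀ c, bslt m k a c → ¬ bslt m k c b) := fun a b => Iff.rfl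
  intro a b
  rw [covIff, covIff]
  constructor
  · intro hadj
    rcases a with _ | ⟨i, j⟩ <;> rcases b with _ | ⟨x, l⟩
    · exact hadj.elim
    · -- a = none, b = some : root is above, so b ⋖ a
      have hxm : x.val = m := hadj
      right
      refine ⟨Or.inl hxm, ?_⟩
      rintro (_ | ⟨y, r⟩) hbc hca
      · exact hca
      · obtain ⟨⟨hcyc, hcond⟩, hl⟩ := hbc
        have hr : ¬ Even r.val := (cyc_parity he hcyc).mp hl
        rcases hca with hy | ⟨_, hr'⟩
        · rcases hcond with ⟨h0a, h0b⟩ | hh | hh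
          · omega
          · omega
          · have := y.isLt; omega
        · exact hr hr'
    · -- a = some, b = none
      have him : i.val = m := hadj
      left
      refine ⟨Or.inl him, ?_⟩
      rintro (_ | ⟨y, r⟩) hac hcb
      · exact hcb
      · obtain ⟨⟨hcyc, hcond⟩, hj⟩ := hac
        have hr : ¬ Even r.val := (cyc_parity he hcyc).mp hj
        rcases hcb with hy | ⟨_, hr'⟩
        · rcases hcond with ⟨h0a, h0b⟩ | hh | hh
          · omega
          · omega
          · have := y.isLt; omega
        · exact hr hr'
    · -- both some
      have hcyc : (cycleGraph (k + 2)).Adj j l := hadj.1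
      rcases Nat.even_or_odd j.val with hj | hj
      · left
        refine ⟨⟨hadj, hj⟩, ?_⟩
        rintro (_ | ⟨y, r⟩) hac hcb
        · exact hcb
        · exact (cyc_parity he hac.1.1).mp hj hcb.2
      · right
        have hjodd : ¬ Even j.val := Nat.not_even_iff_odd.mpr hj
        have hl : Even l.val := by
          rcases Nat.even_or_odd l.val with h | h
          · exact h
          · exact absurd ((cyc_parity he hcyc).mpr (Nat.not_even_iff_odd.mpr h)) hjodd
        refine ⟨⟨hadj.symm, hl⟩, ?_⟩
        rintro (_ | ⟨y, r⟩) hbc hca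
        · exact hca
        · exact (cyc_parity he hbc.1.1).mp hl hca.2
  · intro hcov
    have key : ∀ a b : Option (Fin (m + 1) × Fin (k + 2)),
        (bslt m k a b ∧ ∀ c, bslt m k a c → ¬ bslt m k c b) →
        (SimpleGraph.Myc m (cycleGraph (k + 2))).Adj a b := by
      rintro (_ | ⟨i, j⟩) b ⟨h1, h2⟩
      · exact h1.elim
      · rcases b with _ | ⟨x, l⟩
        · -- b = none
          rcases h1 with him | ⟨him, hj⟩
          · exact him
          · exfalso
            exact h2 (some (⟨m, by omega⟩, j + 1)) ⟨⟨cadj j, Or.inr (Or.inl him)⟩, hj⟩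
              (Or.inl rfl)
        · exact h1.1
    rcases hcov with h | h
    · exact key a b h
    · exact (key b a h).symm

/-- For `n ≥ 3` and `m ≥ 1`, the generalized Mycielskian `M_m(C_n)` of the `n`-cycle is a
cover graph if and only if `n` is even. -/
theorem myc_cycleGraph_isCoverGraph_iff_even (n m : ℕ) (hn : 3 ≤ n) (hm : 1 ≤ m) :
    (SimpleGraph.Myc m (cycleGraph n)).IsCoverGraph ↔ Even n := by
  constructor
  · intro h
    by_contra hodd
    exact not_cover_of_odd n m hn hm hodd h
  · intro he
    exact cover_of_even n m hn hm he
end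

section
/- For any graph G and m ≥ 1, the generalized Mycielskian M_m(G) is a cover graph if and only if G is bipartite. -/
open SimpleGraph

open Finset



section CovInd
variable {W : Type*} [PartialOrder W]

open scoped Classical in
noncomputable def covInd (a b : W) : ZMod 2 := if a ⋖ b then 1 else 0

lemma covInd_pos {a b : W} (h : a ⋖ b) : covInd a b = 1 := by
  unfold covInd; rw [if_pos h]

lemma covInd_neg_rev {a b : W} (h : a ⋖ b) : covInd b a = 0 := by
  unfold covInd
  rw [if_neg]
  intro h'
  exact absurd (h.lt.trans h'.lt) (lt_irrefl a)

lemma covInd_add {a b : W} (h : a ⋖ b ∨ b ⋖ a) : covInd a b + covInd b a = 1 := by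
  rcases h with h | h
  · rw [covInd_pos h, covInd_neg_rev h]; decide
  · rw [covInd_neg_rev h, covInd_pos h]; decide

lemma covInd_quad {a b c d : W}
    (h1 : a ⋖ b ∨ b ⋖ a) (h2 : b ⋖ c ∨ c ⋖ b)
    (h3 : c ⋖ d ∨ d ⋖ c) (h4 : d ⋖ a ∨ a ⋖ d) :
    covInd a b + covInd b c + covInd c d + covInd d a = 0 := by
  have chain : ∀ {x y z t : W}, x ⋖ y → y ⋖ z → z ⋖ t → x ⋖ t → False :=
    fun hxy hyz hzt hxt => hxt.2 hxy.lt (hyz.lt.trans hzt.lt)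
  rcases h1 with h1 | h1 <;> rcases h2 with h2 | h2 <;>
    rcases h3 with h3 | h3 <;> rcases h4 with h4 | h4
  · exact absurd (((h1.lt.trans h2.lt).trans h3.lt).trans h4.lt) (lt_irrefl a)
  · exact absurd (chain h1 h2 h3 h4) id
  · exact absurd (chain h4 h1 h2 h3) id
  · rw [covInd_pos h1, covInd_pos h2, covInd_neg_rev h3, covInd_neg_rev h4]; decide
  · exact absurd (chain h3 h4 h1 h2) id
  · rw [covInd_pos h1, covInd_neg_rev h2, covInd_pos h3, covInd_neg_rev h4]; decide
  · rw [covInd_pos h1, covInd_neg_rev h2, covInd_neg_rev h3, covInd_pos h4]; decide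
  · exact absurd (chain h4 h3 h2 h1) id
  · exact absurd (chain h2 h3 h4 h1) id
  · rw [covInd_neg_rev h1, covInd_pos h2, covInd_pos h3, covInd_neg_rev h4]; decide
  · rw [covInd_neg_rev h1, covInd_pos h2, covInd_neg_rev h3, covInd_pos h4]; decide
  · exact absurd (chain h1 h4 h3 h2) id
  · rw [covInd_neg_rev h1, covInd_neg_rev h2, covInd_pos h3, covInd_pos h4]; decide
  · exact absurd (chain h2 h1 h4 h3) id
  · exact absurd (chain h3 h2 h1 h4) id
  · exact absurd (h4.lt.trans ((h3.lt.trans h2.lt).trans h1.lt)) (lt_irrefl a)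

end CovInd

section Nd
variable {V : Type*} (m : ℕ) (w : ℕ → V)

def ndV (i t : ℕ) : Option (Fin (m + 1) × V) :=
  some (⟨min i m, by omega⟩, w t)

variable {G : SimpleGraph V}

lemma myc_adj_some {i k : Fin (m + 1)} {j l : V} (h1 : G.Adj j l)
    (h2 : (i.val = 0 ∧ k.val = 0) ∨ i.val + 1 = k.val ∨ k.val + 1 = i.val) :
    (Myc m G).Adj (some (i, j)) (some (k, l)) := ⟨h1, h2⟩

lemma myc_adj_none {k : Fin (m + 1)} {l : V} (h : k.val = m) :
    (Myc m G).Adj none (some (k, l)) := h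

lemma ndV_adj_cross {i t s : ℕ} (hi : i + 1 ≤ m) (h : G.Adj (w t) (w s)) :
    (Myc m G).Adj (ndV m w i t) (ndV m w (i + 1) s) := by
  refine myc_adj_some m h (Or.inr (Or.inl ?_))
  show min i m + 1 = min (i + 1) m
  omega

lemma ndV_adj_bottom {t s : ℕ} (h : G.Adj (w t) (w s)) :
    (Myc m G).Adj (ndV m w 0 t) (ndV m w 0 s) := by
  refine myc_adj_some m h (Or.inl ⟨?_, ?_⟩) <;> · show min 0 m = 0; omega

lemma ndV_adj_top (t : ℕ) : (Myc m G).Adj none (ndV m w m t) := by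
  refine myc_adj_none m ?_
  show min m m = m
  omega

end Nd



section ZH
lemma zmod2_add_self : ∀ x : ZMod 2, x + x = 0 := by decide

lemma zh1 : ∀ A B C D Y B1 B0 : ZMod 2, A + B + C + D = 0 → B + Y = 1 →
    C + B1 = 1 → D + B0 = 1 → A + Y = 1 + B0 + B1 := by decide

lemma zh2 : ∀ A B C D P U : ZMod 2, A + B + C + D = 0 → A + P = 1 →
    D + U = 1 → P + B = C + U := by decide

lemma zh3 : ∀ A B C D P S2 : ZMod 2, A + B + C + D = 0 → B + P = 1 →
    D + S2 = 1 → P + C = A + S2 := by decide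

lemma sum_shift {N : ℕ} (F : ℕ → ZMod 2) (hF : ∀ t, F (t + N) = F t) :
    ∑ t ∈ range N, F (t + 1) = ∑ t ∈ range N, F t := by
  have h1 := Finset.sum_range_succ' F N
  have h2 := Finset.sum_range_succ F N
  have h3 : F N = F 0 := by simpa using hF 0
  have h4 := h1.symm.trans h2
  rw [h3] at h4
  exact add_right_cancel h4

lemma odd_natCast_zmod2 {N : ℕ} (hN : Odd N) : (N : ZMod 2) = 1 := by
  obtain ⟨c, rfl⟩ := hN
  push_cast
  rw [show (2 : ZMod 2) = 0 by decide]
  ring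
end ZH

lemma isCoverGraph_of_three_proper {W : Type*} (H : SimpleGraph W) (f : W → ℕ)
    (hf : ∀ v, f v ≤ 2) (hprop : ∀ ⦃a b⦄, H.Adj a b → f a ≠ f b)
    (htri : ∀ ⦃a b c⦄, H.Adj a b → H.Adj b c → H.Adj a c → False) :
    H.IsCoverGraph := by
  classical
  set le : W → W → Prop := fun a b =>
    a = b ∨ (H.Adj a b ∧ f a < f b) ∨
      ∃ x, H.Adj a x ∧ H.Adj x b ∧ f a < f x ∧ f x < f b with hle
  have hlt_of : ∀ {a b}, le a b → a ≠ b → f a < f b := by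
    intro a b h hne
    rcases h with rfl | ⟨_, h⟩ | ⟨x, _, _, h1, h2⟩
    · exact absurd rfl hne
    · exact h
    · omega
  have hrefl : ∀ a, le a a := fun a => Or.inl rfl
  have htrans : ∀ a b c, le a b → le b c → le a c := by
    intro a b c hab hbc
    rcases hab with rfl | ⟨hadj, hlt⟩ | ⟨x, hax, hxb, h1, h2⟩
    · exact hbc
    · rcases hbc with rfl | ⟨hadj', hlt'⟩ | ⟨y, hby, hyc, h3, h4⟩
      · exact Or.inr (Or.inl ⟨hadj, hlt⟩)
      · exact Or.inr (Or.inr ⟨b, hadj, hadj', hlt, hlt'⟩)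
      · exact absurd (hf c) (by omega)
    · rcases hbc with rfl | ⟨hadj', hlt'⟩ | ⟨y, hby, hyc, h3, h4⟩
      · exact Or.inr (Or.inr ⟨x, hax, hxb, h1, h2⟩)
      · exact absurd (hf c) (by omega)
      · exact absurd (hf c) (by omega)
  have hanti : ∀ a b, le a b → le b a → a = b := by
    intro a b h1 h2
    by_contra hne
    have g1 := hlt_of h1 hne
    have g2 := hlt_of h2 (Ne.symm hne)
    omega
  let p : PartialOrder W :=
    { le := le
      lt := fun a b => le a b ∧ ¬ le b a
      le_refl := hrefl
      le_trans := htrans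
      lt_iff_le_not_ge := fun _ _ => Iff.rfl
      le_antisymm := hanti }
  have ltP : ∀ x y : W, (@LT.lt W p.toPreorder.toLT x y) ↔ (le x y ∧ x ≠ y) := by
    intro x y
    constructor
    · rintro ⟨hxy, hyx⟩
      refine ⟨hxy, ?_⟩
      rintro rfl
      exact hyx hxy
    · rintro ⟨hxy, hne⟩
      exact ⟨hxy, fun h2 => hne (hanti _ _ hxy h2)⟩
  have cov_of : ∀ a b, H.Adj a b → f a < f b → @CovBy W p.toPreorder.toLT a b := by
    intro a b hadj hlt
    refine ⟨(ltP a b).mpr ⟨Or.inr (Or.inl ⟨hadj, hlt⟩), hadj.ne⟩, ?_⟩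
    intro x hax hxb
    obtain ⟨l1, hne1⟩ := (ltP a x).mp hax
    obtain ⟨l2, hne2⟩ := (ltP x b).mp hxb
    rcases l1 with rfl | ⟨ha1, hl1⟩ | ⟨y, hy1, hy2, hy3, hy4⟩
    · exact hne1 rfl
    · rcases l2 with rfl | ⟨hb1, hl2⟩ | ⟨z, hz1, hz2, hz3, hz4⟩
      · exact hne2 rfl
      · exact htri ha1 hb1 hadj
      · exact absurd (hf b) (by omega)
    · have hfb : f x < f b := hlt_of l2 hne2
      exact absurd (hf b) (by omega)
  refine ⟨p, fun a b => ?_⟩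
  constructor
  · intro hadj
    have hne := hprop hadj
    rcases Nat.lt_or_ge (f a) (f b) with h | h
    · exact Or.inl (cov_of a b hadj h)
    · exact Or.inr (cov_of b a hadj.symm (by omega))
  · intro h
    have key : ∀ x y : W, @CovBy W p.toPreorder.toLT x y → H.Adj x y := by
      intro x y hc
      obtain ⟨hxy, hne⟩ := (ltP x y).mp hc.lt
      rcases hxy with rfl | ⟨hadj, _⟩ | ⟨z, hxz, hzy, g1, g2⟩
      · exact absurd rfl hne
      · exact hadj
      · exfalso
        refine hc.2 (c := z) ((ltP x z).mpr ⟨Or.inr (Or.inl ⟨hxz, g1⟩), ?_⟩)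
          ((ltP z y).mpr ⟨Or.inr (Or.inl ⟨hzy, g2⟩), ?_⟩)
        · rintro rfl; omega
        · rintro rfl; omega
    rcases h with h | h
    · exact key a b h
    · exact (key b a h).symm



lemma exists_odd_closed_walk {V : Type*} {G : SimpleGraph V} (h : ¬ G.Colorable 2) :
    ∃ (v : V) (p : G.Walk v v), Odd p.length := by
  by_contra hno
  push_neg at hno
  apply h
  classical
  have heven : ∀ (v : V) (p : G.Walk v v), p.length % 2 = 0 := by
    intro v p
    have := hno v p
    rw [Nat.odd_iff] at this
    omega
  have hrep : ∀ v : V, G.Reachable ((G.connectedComponentMk v).out) v := by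
    intro v
    apply ConnectedComponent.exact
    exact (G.connectedComponentMk v).out_eq
  have hwalk : ∀ v : V, Nonempty (G.Walk ((G.connectedComponentMk v).out) v) :=
    fun v => hrep v
  let c : V → Fin 2 := fun v => ⟨(hwalk v).some.length % 2, by omega⟩
  refine ⟨SimpleGraph.Coloring.mk c ?_⟩
  intro a b hadj hc
  have hcc : G.connectedComponentMk a = G.connectedComponentMk b :=
    ConnectedComponent.connectedComponentMk_eq_of_adj hadj
  have hroot : (G.connectedComponentMk a).out = (G.connectedComponentMk b).out := by
    rw [hcc]
  set pa := (hwalk a).some with hpa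
  set pb := (hwalk b).some with hpb
  have hclosed := heven _ (pa.append (Walk.cons hadj (pb.reverse.copy rfl hroot.symm)))
  rw [Walk.length_append, Walk.length_cons, Walk.length_copy, Walk.length_reverse] at hclosed
  have : pa.length % 2 = pb.length % 2 := by
    have := congrArg Fin.val hc
    simpa [c] using this
  omega

lemma myc_not_cover {V : Type*} (G : SimpleGraph V) (m : ℕ) (hm : 1 ≤ m)
    (w : ℕ → V) (N : ℕ) (hN : Odd N) (hper : ∀ t, w (t + N) = w t)
    (hwadj : ∀ t, G.Adj (w t) (w (t + 1)))
    (p : PartialOrder (Option (Fin (m + 1) × V)))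
    (hp : ∀ a b, (SimpleGraph.Myc m G).Adj a b →
      (@CovBy _ p.toPreorder.toLT a b ∨ @CovBy _ p.toPreorder.toLT b a)) :
    False := by
  obtain ⟨k, rfl⟩ : ∃ k, m = k + 1 := ⟨m - 1, by omega⟩
  letI := p
  have hcov : ∀ {a b}, (SimpleGraph.Myc (k + 1) G).Adj a b → (a ⋖ b ∨ b ⋖ a) :=
    fun h => hp _ _ h
  have perS : ∀ i t, (ndV (k + 1) w (i) ( t + N)) = (ndV (k + 1) w (i) ( t)) := by
    intro i t
    unfold ndV
    rw [hper]
  -- the three claims about the level sums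
  have claim1 :
      ∑ t ∈ range N, (covInd (ndV (k + 1) w (0) ( t + 1)) (ndV (k + 1) w (1) ( t)) + covInd (ndV (k + 1) w (0) ( t + 1)) (ndV (k + 1) w (1) ( t + 1 + 1)))
        = 1 := by
    have per1 : ∀ t : ℕ,
        covInd (ndV (k + 1) w (0) ( t)) (ndV (k + 1) w (1) ( t + 1)) + covInd (ndV (k + 1) w (0) ( t + 1 + 1)) (ndV (k + 1) w (1) ( t + 1))
          = 1 + covInd (ndV (k + 1) w (0) ( t)) (ndV (k + 1) w (0) ( t + 1)) + covInd (ndV (k + 1) w (0) ( t + 1)) (ndV (k + 1) w (0) ( t + 1 + 1)) := by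
      intro t
      have hA := ndV_adj_cross (k + 1) w (i := 0) (G := G) (by omega) (hwadj t)
      have hB := (ndV_adj_cross (k + 1) w (i := 0) (G := G) (by omega) (hwadj (t + 1)).symm).symm
      have hC := ndV_adj_bottom (k + 1) w (G := G) (hwadj (t + 1)).symm
      have hD := ndV_adj_bottom (k + 1) w (G := G) (hwadj t).symm
      exact zh1 _ _ _ _ _ _ _ (covInd_quad (hcov hA) (hcov hB) (hcov hC) (hcov hD))
        (covInd_add (hcov hB)) (covInd_add (hcov hC)) (covInd_add (hcov hD))
    have e0 : ∑ t ∈ range N, (covInd (ndV (k + 1) w (0) ( t + 1)) (ndV (k + 1) w (1) ( t)) + covInd (ndV (k + 1) w (0) ( t + 1)) (ndV (k + 1) w (1) ( t + 1 + 1)))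
        = ∑ t ∈ range N, covInd (ndV (k + 1) w (0) ( t + 1)) (ndV (k + 1) w (1) ( t))
          + ∑ t ∈ range N, covInd (ndV (k + 1) w (0) ( t + 1)) (ndV (k + 1) w (1) ( t + 1 + 1)) := Finset.sum_add_distrib
    have eQ : ∑ t ∈ range N, covInd (ndV (k + 1) w (0) ( t + 1)) (ndV (k + 1) w (1) ( t + 1 + 1))
        = ∑ t ∈ range N, covInd (ndV (k + 1) w (0) ( t)) (ndV (k + 1) w (1) ( t + 1)) := by
      have := sum_shift (N := N) (fun s => covInd (ndV (k + 1) w (0) ( s)) (ndV (k + 1) w (1) ( s + 1))) (fun s => by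
        have h1 : s + N + 1 = s + 1 + N := by omega
        simp only [h1, perS])
      simpa using this
    have eP : ∑ t ∈ range N, covInd (ndV (k + 1) w (0) ( t + 1 + 1)) (ndV (k + 1) w (1) ( t + 1))
        = ∑ t ∈ range N, covInd (ndV (k + 1) w (0) ( t + 1)) (ndV (k + 1) w (1) ( t)) := by
      have := sum_shift (N := N) (fun s => covInd (ndV (k + 1) w (0) ( s + 1)) (ndV (k + 1) w (1) ( s))) (fun s => by
        have h1 : s + N + 1 = s + 1 + N := by omega
        simp only [h1, perS])
      simpa using this
    have e1 : ∑ t ∈ range N, (covInd (ndV (k + 1) w (0) ( t)) (ndV (k + 1) w (1) ( t + 1)) + covInd (ndV (k + 1) w (0) ( t + 1 + 1)) (ndV (k + 1) w (1) ( t + 1)))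
        = ∑ t ∈ range N, (1 + covInd (ndV (k + 1) w (0) ( t)) (ndV (k + 1) w (0) ( t + 1)) + covInd (ndV (k + 1) w (0) ( t + 1)) (ndV (k + 1) w (0) ( t + 1 + 1))) :=
      Finset.sum_congr rfl (fun t _ => per1 t)
    have e2 : ∑ t ∈ range N, (covInd (ndV (k + 1) w (0) ( t)) (ndV (k + 1) w (1) ( t + 1)) + covInd (ndV (k + 1) w (0) ( t + 1 + 1)) (ndV (k + 1) w (1) ( t + 1)))
        = ∑ t ∈ range N, covInd (ndV (k + 1) w (0) ( t)) (ndV (k + 1) w (1) ( t + 1))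
          + ∑ t ∈ range N, covInd (ndV (k + 1) w (0) ( t + 1 + 1)) (ndV (k + 1) w (1) ( t + 1)) := Finset.sum_add_distrib
    have e3 : ∑ t ∈ range N, (1 + covInd (ndV (k + 1) w (0) ( t)) (ndV (k + 1) w (0) ( t + 1)) + covInd (ndV (k + 1) w (0) ( t + 1)) (ndV (k + 1) w (0) ( t + 1 + 1)))
        = (∑ t ∈ range N, ((1 : ZMod 2) + covInd (ndV (k + 1) w (0) ( t)) (ndV (k + 1) w (0) ( t + 1))))
          + ∑ t ∈ range N, covInd (ndV (k + 1) w (0) ( t + 1)) (ndV (k + 1) w (0) ( t + 1 + 1)) := Finset.sum_add_distrib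
    have e4 : ∑ t ∈ range N, ((1 : ZMod 2) + covInd (ndV (k + 1) w (0) ( t)) (ndV (k + 1) w (0) ( t + 1)))
        = (∑ _t ∈ range N, (1 : ZMod 2)) + ∑ t ∈ range N, covInd (ndV (k + 1) w (0) ( t)) (ndV (k + 1) w (0) ( t + 1)) :=
      Finset.sum_add_distrib
    have e5 : ∑ t ∈ range N, covInd (ndV (k + 1) w (0) ( t + 1)) (ndV (k + 1) w (0) ( t + 1 + 1))
        = ∑ t ∈ range N, covInd (ndV (k + 1) w (0) ( t)) (ndV (k + 1) w (0) ( t + 1)) := by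
      have := sum_shift (N := N) (fun s => covInd (ndV (k + 1) w (0) ( s)) (ndV (k + 1) w (0) ( s + 1))) (fun s => by
        have h1 : s + N + 1 = s + 1 + N := by omega
        simp only [h1, perS])
      simpa using this
    have e6 : ∑ _t ∈ range N, (1 : ZMod 2) = 1 := by
      rw [Finset.sum_const, Finset.card_range, nsmul_eq_mul, mul_one, odd_natCast_zmod2 hN]
    rw [e0, eQ, ← eP,
      add_comm (∑ t ∈ range N, covInd (ndV (k + 1) w (0) ( t + 1 + 1)) (ndV (k + 1) w (1) ( t + 1)))
        (∑ t ∈ range N, covInd (ndV (k + 1) w (0) ( t)) (ndV (k + 1) w (1) ( t + 1))),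
      ← e2, e1, e3, e4, e5, e6, add_assoc,
      zmod2_add_self (∑ t ∈ range N, covInd (ndV (k + 1) w (0) ( t)) (ndV (k + 1) w (0) ( t + 1))), add_zero]
  have claim2 : ∀ i, i + 2 ≤ k + 1 →
      (∑ t ∈ range N, (covInd (ndV (k + 1) w (i) ( t + 1)) (ndV (k + 1) w (i + 1) ( t)) + covInd (ndV (k + 1) w (i) ( t + 1)) (ndV (k + 1) w (i + 1) ( t + 1 + 1))))
        = ∑ t ∈ range N,
            (covInd (ndV (k + 1) w (i + 1) ( t + 1)) (ndV (k + 1) w (i + 2) ( t)) + covInd (ndV (k + 1) w (i + 1) ( t + 1)) (ndV (k + 1) w (i + 2) ( t + 1 + 1))) := by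
    intro i hi
    have per2 : ∀ t : ℕ,
        covInd (ndV (k + 1) w (i) ( t + 1)) (ndV (k + 1) w (i + 1) ( t)) + covInd (ndV (k + 1) w (i) ( t + 1)) (ndV (k + 1) w (i + 1) ( t + 1 + 1))
          = covInd (ndV (k + 1) w (i + 1) ( t + 1 + 1)) (ndV (k + 1) w (i + 2) ( t + 1)) + covInd (ndV (k + 1) w (i + 1) ( t)) (ndV (k + 1) w (i + 2) ( t + 1)) := by
      intro t
      have hA := (ndV_adj_cross (k + 1) w (i := i) (G := G) (by omega) (hwadj t).symm).symm
      have hB := ndV_adj_cross (k + 1) w (i := i) (G := G) (by omega) (hwadj (t + 1))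
      have hC := ndV_adj_cross (k + 1) w (i := i + 1) (G := G) (by omega) (hwadj (t + 1)).symm
      have hD := (ndV_adj_cross (k + 1) w (i := i + 1) (G := G) (by omega) (hwadj t)).symm
      exact zh2 _ _ _ _ _ _ (covInd_quad (hcov hA) (hcov hB) (hcov hC) (hcov hD))
        (covInd_add (hcov hA)) (covInd_add (hcov hD))
    have e1 : ∑ t ∈ range N,
        (covInd (ndV (k + 1) w (i) ( t + 1)) (ndV (k + 1) w (i + 1) ( t)) + covInd (ndV (k + 1) w (i) ( t + 1)) (ndV (k + 1) w (i + 1) ( t + 1 + 1)))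
        = ∑ t ∈ range N,
            (covInd (ndV (k + 1) w (i + 1) ( t + 1 + 1)) (ndV (k + 1) w (i + 2) ( t + 1)) + covInd (ndV (k + 1) w (i + 1) ( t)) (ndV (k + 1) w (i + 2) ( t + 1))) :=
      Finset.sum_congr rfl (fun t _ => per2 t)
    have e2 : ∑ t ∈ range N,
        (covInd (ndV (k + 1) w (i + 1) ( t + 1 + 1)) (ndV (k + 1) w (i + 2) ( t + 1)) + covInd (ndV (k + 1) w (i + 1) ( t)) (ndV (k + 1) w (i + 2) ( t + 1)))
        = ∑ t ∈ range N, covInd (ndV (k + 1) w (i + 1) ( t + 1 + 1)) (ndV (k + 1) w (i + 2) ( t + 1))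
          + ∑ t ∈ range N, covInd (ndV (k + 1) w (i + 1) ( t)) (ndV (k + 1) w (i + 2) ( t + 1)) := Finset.sum_add_distrib
    have eR : ∑ t ∈ range N, covInd (ndV (k + 1) w (i + 1) ( t + 1 + 1)) (ndV (k + 1) w (i + 2) ( t + 1))
        = ∑ t ∈ range N, covInd (ndV (k + 1) w (i + 1) ( t + 1)) (ndV (k + 1) w (i + 2) ( t)) := by
      have := sum_shift (N := N) (fun s => covInd (ndV (k + 1) w (i + 1) ( s + 1)) (ndV (k + 1) w (i + 2) ( s))) (fun s => by
        have h1 : s + N + 1 = s + 1 + N := by omega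
        simp only [h1, perS])
      simpa using this
    have eU : ∑ t ∈ range N, covInd (ndV (k + 1) w (i + 1) ( t)) (ndV (k + 1) w (i + 2) ( t + 1))
        = ∑ t ∈ range N, covInd (ndV (k + 1) w (i + 1) ( t + 1)) (ndV (k + 1) w (i + 2) ( t + 1 + 1)) := by
      have := sum_shift (N := N) (fun s => covInd (ndV (k + 1) w (i + 1) ( s)) (ndV (k + 1) w (i + 2) ( s + 1))) (fun s => by
        have h1 : s + N + 1 = s + 1 + N := by omega
        simp only [h1, perS])
      simpa using this.symm
    have e3 : ∑ t ∈ range N,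
        (covInd (ndV (k + 1) w (i + 1) ( t + 1)) (ndV (k + 1) w (i + 2) ( t)) + covInd (ndV (k + 1) w (i + 1) ( t + 1)) (ndV (k + 1) w (i + 2) ( t + 1 + 1)))
        = ∑ t ∈ range N, covInd (ndV (k + 1) w (i + 1) ( t + 1)) (ndV (k + 1) w (i + 2) ( t))
          + ∑ t ∈ range N, covInd (ndV (k + 1) w (i + 1) ( t + 1)) (ndV (k + 1) w (i + 2) ( t + 1 + 1)) := Finset.sum_add_distrib
    rw [e1, e2, eR, eU, e3]
  have claim3 :
      ∑ t ∈ range N, (covInd (ndV (k + 1) w (k) ( t + 1)) (ndV (k + 1) w (k + 1) ( t)) + covInd (ndV (k + 1) w (k) ( t + 1)) (ndV (k + 1) w (k + 1) ( t + 1 + 1)))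
        = 0 := by
    have per3 : ∀ t : ℕ,
        covInd (ndV (k + 1) w (k) ( t + 1)) (ndV (k + 1) w (k + 1) ( t)) + covInd (ndV (k + 1) w (k) ( t + 1)) (ndV (k + 1) w (k + 1) ( t + 1 + 1))
          = covInd (none : Option (Fin (k + 1 + 1) × V)) (ndV (k + 1) w (k + 1) ( t))
            + covInd (none : Option (Fin (k + 1 + 1) × V)) (ndV (k + 1) w (k + 1) ( t + 1 + 1)) := by
      intro t
      have hA : (SimpleGraph.Myc (k + 1) G).Adj none (ndV (k + 1) w (k + 1) ( t)) := ndV_adj_top (k + 1) w t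
      have hB := (ndV_adj_cross (k + 1) w (i := k) (G := G) (by omega) (hwadj t).symm).symm
      have hC := ndV_adj_cross (k + 1) w (i := k) (G := G) (by omega) (hwadj (t + 1))
      have hD : (SimpleGraph.Myc (k + 1) G).Adj (ndV (k + 1) w (k + 1) ( t + 1 + 1)) none :=
        (ndV_adj_top (k + 1) w (t + 1 + 1)).symm
      exact zh3 _ _ _ _ _ _ (covInd_quad (hcov hA) (hcov hB) (hcov hC) (hcov hD))
        (covInd_add (hcov hB)) (covInd_add (hcov hD))
    have e1 : ∑ t ∈ range N,
        (covInd (ndV (k + 1) w (k) ( t + 1)) (ndV (k + 1) w (k + 1) ( t)) + covInd (ndV (k + 1) w (k) ( t + 1)) (ndV (k + 1) w (k + 1) ( t + 1 + 1)))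
        = ∑ t ∈ range N,
            (covInd (none : Option (Fin (k + 1 + 1) × V)) (ndV (k + 1) w (k + 1) ( t))
              + covInd (none : Option (Fin (k + 1 + 1) × V)) (ndV (k + 1) w (k + 1) ( t + 1 + 1))) :=
      Finset.sum_congr rfl (fun t _ => per3 t)
    have e2 : ∑ t ∈ range N,
        (covInd (none : Option (Fin (k + 1 + 1) × V)) (ndV (k + 1) w (k + 1) ( t))
          + covInd (none : Option (Fin (k + 1 + 1) × V)) (ndV (k + 1) w (k + 1) ( t + 1 + 1)))
        = ∑ t ∈ range N, covInd (none : Option (Fin (k + 1 + 1) × V)) (ndV (k + 1) w (k + 1) ( t))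
          + ∑ t ∈ range N, covInd (none : Option (Fin (k + 1 + 1) × V)) (ndV (k + 1) w (k + 1) ( t + 1 + 1)) :=
      Finset.sum_add_distrib
    have eS1 : ∑ t ∈ range N, covInd (none : Option (Fin (k + 1 + 1) × V)) (ndV (k + 1) w (k + 1) ( t + 1 + 1))
        = ∑ t ∈ range N, covInd (none : Option (Fin (k + 1 + 1) × V)) (ndV (k + 1) w (k + 1) ( t + 1)) := by
      have := sum_shift (N := N) (fun s => covInd (none : Option (Fin (k + 1 + 1) × V)) (ndV (k + 1) w (k + 1) ( s + 1)))
        (fun s => by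
          have h1 : s + N + 1 = s + 1 + N := by omega
          simp only [h1, perS])
      simpa using this
    have eS2 : ∑ t ∈ range N, covInd (none : Option (Fin (k + 1 + 1) × V)) (ndV (k + 1) w (k + 1) ( t + 1))
        = ∑ t ∈ range N, covInd (none : Option (Fin (k + 1 + 1) × V)) (ndV (k + 1) w (k + 1) ( t)) := by
      have := sum_shift (N := N) (fun s => covInd (none : Option (Fin (k + 1 + 1) × V)) (ndV (k + 1) w (k + 1) ( s)))
        (fun s => by simp only [perS])
      simpa using this
    rw [e1, e2, eS1, eS2, zmod2_add_self]
  have main : ∀ i, i + 1 ≤ k + 1 →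
      (∑ t ∈ range N, (covInd (ndV (k + 1) w (i) ( t + 1)) (ndV (k + 1) w (i + 1) ( t)) + covInd (ndV (k + 1) w (i) ( t + 1)) (ndV (k + 1) w (i + 1) ( t + 1 + 1))))
        = 1 := by
    intro i
    induction i with
    | zero => intro _; exact claim1
    | succ j ih =>
      intro hj
      rw [← claim2 j (by omega)]
      exact ih (by omega)
  have hfin := (main k (by omega)).symm.trans claim3
  exact absurd hfin (by decide)

/-- For any graph `G` and `m ≥ 1`, the generalized Mycielskian `M_m(G)` is a cover graph
if and only if `G` is bipartite (i.e. `2`-colorable). -/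
theorem myc_isCoverGraph_iff_bipartite {V : Type*} [Fintype V] (G : SimpleGraph V)
    (m : ℕ) (hm : 1 ≤ m) : (SimpleGraph.Myc m G).IsCoverGraph ↔ G.Colorable 2 := by
  constructor
  · intro hcov
    by_contra hncol
    obtain ⟨v, pw, hodd⟩ := exists_odd_closed_walk hncol
    obtain ⟨p, hp⟩ := hcov
    have hNpos : 0 < pw.length := by
      rcases hodd with ⟨c, hc⟩; omega
    refine myc_not_cover G m hm (fun t => pw.getVert (t % pw.length)) pw.length hodd
      (fun t => by simp [Nat.add_mod_right]) ?_ p (fun a b h => (hp a b).mp h)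
    intro t
    show G.Adj (pw.getVert (t % pw.length)) (pw.getVert ((t + 1) % pw.length))
    have h1 : t % pw.length < pw.length := Nat.mod_lt _ hNpos
    by_cases h2 : t % pw.length + 1 < pw.length
    · have h3 : (t + 1) % pw.length = t % pw.length + 1 := by
        rw [Nat.add_mod, Nat.mod_eq_of_lt (show 1 < pw.length by omega),
          Nat.mod_eq_of_lt h2]
      rw [h3]
      exact pw.adj_getVert_succ h1
    · have h4 : (t + 1) % pw.length = 0 := by
        by_cases hL : 1 < pw.length
        · rw [Nat.add_mod, Nat.mod_eq_of_lt hL,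
            show t % pw.length + 1 = pw.length by omega, Nat.mod_self]
        · have hL1 : pw.length = 1 := by omega
          simp [hL1, Nat.mod_one]
      rw [h4]
      have h5 := pw.adj_getVert_succ (i := pw.length - 1) (by omega)
      rw [show pw.length - 1 + 1 = pw.length by omega, SimpleGraph.Walk.getVert_length] at h5
      rw [show t % pw.length = pw.length - 1 by omega]
      simpa using h5
  · intro hcol
    classical
    let C : G.Coloring (Fin 2) := hcol.some
    refine isCoverGraph_of_three_proper (SimpleGraph.Myc m G)
      (fun x => match x with | none => 2 | some q => (C q.2).val) ?_ ?_ ?_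
    · rintro (_ | ⟨i, j⟩)
      · exact le_refl 2
      · show (C j).val ≤ 2
        have := (C j).isLt; omega
    · rintro (_ | ⟨i, j⟩) (_ | ⟨k, l⟩) h
      · exact h.elim
      · show (2 : ℕ) ≠ (C l).val
        have := (C l).isLt; omega
      · show (C j).val ≠ 2
        have := (C j).isLt; omega
      · show (C j).val ≠ (C l).val
        have hne := C.valid h.1
        exact fun he => hne (Fin.val_injective he)
    · rintro (_ | ⟨i, j⟩) (_ | ⟨k, l⟩) (_ | ⟨r, s⟩) h1 h2 h3
      · exact h1.elim
      · exact h1.elim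
      · exact h3.elim
      · have e1 : k.val = m := h1
        have e2 : r.val = m := h3
        obtain ⟨hG2, hc2⟩ := h2
        omega
      · exact h2.elim
      · have e1 : i.val = m := h1
        have e2 : r.val = m := h2
        obtain ⟨hG3, hc3⟩ := h3
        omega
      · have e1 : k.val = m := h2
        have e2 : i.val = m := h3
        obtain ⟨hG1, hc1⟩ := h1
        omega
      · obtain ⟨hG1, -⟩ := h1
        obtain ⟨hG2, -⟩ := h2
        obtain ⟨hG3, -⟩ := h3
        have d1 : (C j).val ≠ (C l).val := fun he => C.valid hG1 (Fin.val_injective he)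
        have d2 : (C l).val ≠ (C s).val := fun he => C.valid hG2 (Fin.val_injective he)
        have d3 : (C j).val ≠ (C s).val := fun he => C.valid hG3 (Fin.val_injective he)
        have b1 := (C j).isLt
        have b2 := (C l).isLt
        have b3 := (C s).isLt
        omega
end

section
/- If G is bipartite with at least one edge and m ≥ 1, then the generalized Mycielskian M_m(G) has chromatic number 3 and girth at least 4. -/
open SimpleGraph

lemma myc_colorable3 {V : Type*} (G : SimpleGraph V) (hbip : G.Colorable 2)
    (m : ℕ) (hm : 1 ≤ m) : (SimpleGraph.Myc m G).Colorable 3 := by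
  obtain ⟨c⟩ := hbip
  refine ⟨SimpleGraph.Coloring.mk (fun x => match x with
    | none => 0
    | some (i, v) => if i.val = m then 2 else (c v).castSucc) ?_⟩
  rintro (_ | ⟨i, j⟩) (_ | ⟨k, l⟩) h
  · exact absurd h (by simp [SimpleGraph.Myc])
  · have hk : k.val = m := h
    dsimp only
    rw [if_pos hk]
    decide
  · have hi : i.val = m := h
    dsimp only
    rw [if_pos hi]
    decide
  · obtain ⟨hadj, hlev⟩ := h
    have hne : c j ≠ c l := c.valid hadj
    dsimp only
    by_cases hi : i.val = m <;> by_cases hk : k.val = m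
    · omega
    · rw [if_pos hi, if_neg hk]
      have h2 : ((c l).castSucc : Fin 3).val < 2 := (c l).isLt
      intro hcon
      rw [← hcon] at h2
      simp at h2
    · rw [if_neg hi, if_pos hk]
      have h2 : ((c j).castSucc : Fin 3).val < 2 := (c j).isLt
      intro hcon
      rw [hcon] at h2
      simp at h2
    · rw [if_neg hi, if_neg hk]
      exact fun hcon => hne (Fin.castSucc_injective _ hcon)

lemma myc_not_colorable2 {V : Type*} (G : SimpleGraph V)
    (hedge : ∃ a b, G.Adj a b) (m : ℕ) : ¬ (SimpleGraph.Myc m G).Colorable 2 := by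
  rintro ⟨f⟩
  obtain ⟨a, b, hab⟩ := hedge
  have key : ∀ i : ℕ, (hi : i ≤ m) →
      f (some (⟨i, by omega⟩, a)) ≠ f (some (⟨i, by omega⟩, b)) := by
    intro i
    induction i with
    | zero =>
      intro _
      exact f.valid (by exact ⟨hab, Or.inl ⟨rfl, rfl⟩⟩)
    | succ n ih =>
      intro hi
      have hn : n ≤ m := by omega
      have h1 : f (some (⟨n+1, by omega⟩, a)) ≠ f (some (⟨n, by omega⟩, b)) :=
        f.valid (by exact ⟨hab, Or.inr (Or.inr rfl)⟩)
      have h2 : f (some (⟨n+1, by omega⟩, b)) ≠ f (some (⟨n, by omega⟩, a)) :=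
        f.valid (by exact ⟨hab.symm, Or.inr (Or.inr rfl)⟩)
      have h3 := ih hn
      intro hcon
      have i1 := (f (some (⟨n+1, by omega⟩, a))).isLt
      have i2 := (f (some (⟨n+1, by omega⟩, b))).isLt
      have i3 := (f (some (⟨n, by omega⟩, a))).isLt
      have i4 := (f (some (⟨n, by omega⟩, b))).isLt
      have e1 : (f (some (⟨n+1, by omega⟩, a))).val ≠ (f (some (⟨n, by omega⟩, b))).val :=
        fun h => h1 (Fin.ext h)
      have e2 : (f (some (⟨n+1, by omega⟩, b))).val ≠ (f (some (⟨n, by omega⟩, a))).val :=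
        fun h => h2 (Fin.ext h)
      have e3 : (f (some (⟨n, by omega⟩, a))).val ≠ (f (some (⟨n, by omega⟩, b))).val :=
        fun h => h3 (Fin.ext h)
      have e4 : (f (some (⟨n+1, by omega⟩, a))).val = (f (some (⟨n+1, by omega⟩, b))).val :=
        congrArg Fin.val hcon
      omega
  have hma : f (some (⟨m, by omega⟩, a)) ≠ f none := f.valid (by exact rfl)
  have hmb : f (some (⟨m, by omega⟩, b)) ≠ f none := f.valid (by exact rfl)
  have hm := key m le_rfl
  have i1 := (f (some (⟨m, by omega⟩, a))).isLt
  have i2 := (f (some (⟨m, by omega⟩, b))).isLt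
  have i3 := (f none).isLt
  have e1 : (f (some (⟨m, by omega⟩, a))).val ≠ (f none).val := fun h => hma (Fin.ext h)
  have e2 : (f (some (⟨m, by omega⟩, b))).val ≠ (f none).val := fun h => hmb (Fin.ext h)
  have e3 : (f (some (⟨m, by omega⟩, a))).val ≠ (f (some (⟨m, by omega⟩, b))).val :=
    fun h => hm (Fin.ext h)
  omega

lemma myc_triangle_free {V : Type*} (G : SimpleGraph V) (hbip : G.Colorable 2)
    (m : ℕ) (hm : 1 ≤ m) : ∀ x y z : Option (Fin (m + 1) × V),
    (SimpleGraph.Myc m G).Adj x y → (SimpleGraph.Myc m G).Adj y z →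
    (SimpleGraph.Myc m G).Adj z x → False := by
  obtain ⟨c⟩ := hbip
  rintro (_ | ⟨i, j⟩) (_ | ⟨k, l⟩) (_ | ⟨p, q⟩) h1 h2 h3
  · exact h1
  · exact h1
  · exact h3
  · -- x = none, y, z some
    have hk : k.val = m := h1
    have hp : p.val = m := h3
    obtain ⟨-, hlev⟩ := h2
    omega
  · exact h2
  · -- y = none, x z some
    have hi : i.val = m := h1
    have hp : p.val = m := h2
    obtain ⟨-, hlev⟩ := h3
    omega
  · -- z = none, x y some
    have hk : k.val = m := h2
    have hi : i.val = m := h3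
    obtain ⟨-, hlev⟩ := h1
    omega
  · have g1 : G.Adj j l := h1.1
    have g2 : G.Adj l q := h2.1
    have g3 : G.Adj q j := h3.1
    have e1 : c j ≠ c l := c.valid g1
    have e2 : c l ≠ c q := c.valid g2
    have e3 : c q ≠ c j := c.valid g3
    have i1 := (c j).isLt
    have i2 := (c l).isLt
    have i3 := (c q).isLt
    have f1 : (c j).val ≠ (c l).val := fun h => e1 (Fin.ext h)
    have f2 : (c l).val ≠ (c q).val := fun h => e2 (Fin.ext h)
    have f3 : (c q).val ≠ (c j).val := fun h => e3 (Fin.ext h)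
    omega
/-- If `G` is bipartite with at least one edge and `m ≥ 1`, then `M_m(G)` has chromatic
number `3` and girth at least `4`. -/
theorem myc_chromaticNumber_and_girth {V : Type*} [Fintype V] (G : SimpleGraph V)
    (hbip : G.Colorable 2) (hedge : ∃ a b, G.Adj a b) (m : ℕ) (hm : 1 ≤ m) :
    (SimpleGraph.Myc m G).chromaticNumber = 3 ∧ 4 ≤ (SimpleGraph.Myc m G).egirth := by
  constructor
  · refine le_antisymm ((myc_colorable3 G hbip m hm).chromaticNumber_le) ?_
    have h2 : ¬ (SimpleGraph.Myc m G).chromaticNumber ≤ 2 := by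
      rw [show ((2 : ℕ∞)) = ((2 : ℕ) : ℕ∞) by norm_num,
        SimpleGraph.chromaticNumber_le_iff_colorable]
      exact myc_not_colorable2 G hedge m
    have : (2 : ℕ∞) < (SimpleGraph.Myc m G).chromaticNumber := not_le.mp h2
    exact Order.add_one_le_of_lt this
  · rw [SimpleGraph.le_egirth]
    intro a w hw
    by_contra hlen
    push_neg at hlen
    have h3 : w.length = 3 := by
      have := hw.three_le_length
      have : w.length < 4 := by exact_mod_cast hlen
      omega
    match w, h3 with
    | .cons h1 (.cons h2 (.cons h3' .nil)), _ =>
      exact myc_triangle_free G hbip m hm _ _ _ h1 h2 h3'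
end

section
/- For p ≥ m ≥ 1, there is a graph homomorphism from M_p(C_{2q+1}) to M_m(C_{2q+1}), given by mapping ⟨i,j⟩ to ⟨0,j⟩ for 0 ≤ i ≤ p−m, to ⟨i−p+m, j⟩ for p−m+1 ≤ i ≤ p, and the root u to the root u. -/
open SimpleGraph

/-- For `p ≥ m ≥ 1`, the map sending the root to the root, `⟨i,j⟩` to `⟨0,j⟩` for
`0 ≤ i ≤ p−m`, and `⟨i,j⟩` to `⟨i−(p−m), j⟩` for `p−m+1 ≤ i ≤ p`, is a graph homomorphism
from `M_p(C_{2q+1})` to `M_m(C_{2q+1})`. -/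
theorem myc_hom_level_collapse (p m q : ℕ) (hm : 1 ≤ m) (hmp : m ≤ p) (hq : 1 ≤ q) :
    ∃ f : SimpleGraph.Myc p (cycleGraph (2 * q + 1)) →g
          SimpleGraph.Myc m (cycleGraph (2 * q + 1)),
      f none = none ∧
      ∀ (i : Fin (p + 1)) (j : Fin (2 * q + 1)),
        f (some (i, j)) =
          if i.val ≤ p - m then some (⟨0, Nat.succ_pos m⟩, j)
          else some (⟨i.val - (p - m), by have := i.isLt; omega⟩, j) := by
  refine ⟨⟨fun x => match x with
    | none => none
    | some (i, j) =>
        if i.val ≤ p - m then some (⟨0, Nat.succ_pos m⟩, j)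
        else some (⟨i.val - (p - m), by have := i.isLt; omega⟩, j), ?_⟩,
    rfl, fun i j => rfl⟩
  rintro (_ | ⟨i, j⟩) (_ | ⟨k, l⟩) h
  · exact h.elim
  · have hk : k.val = p := h
    have hk' : ¬ k.val ≤ p - m := by omega
    dsimp only
    rw [if_neg hk']
    show (k.val - (p - m) = m)
    omega
  · have hi : i.val = p := h
    have hi' : ¬ i.val ≤ p - m := by omega
    dsimp only
    rw [if_neg hi']
    show (i.val - (p - m) = m)
    omega
  · obtain ⟨hjl, hik⟩ : (cycleGraph (2*q+1)).Adj j l ∧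
      ((i.val = 0 ∧ k.val = 0) ∨ i.val + 1 = k.val ∨ k.val + 1 = i.val) := h
    dsimp only
    by_cases h1 : i.val ≤ p - m <;> by_cases h2 : k.val ≤ p - m
    · rw [if_pos h1, if_pos h2]
      exact ⟨hjl, Or.inl ⟨rfl, rfl⟩⟩
    · rw [if_pos h1, if_neg h2]
      refine ⟨hjl, Or.inr (Or.inl ?_)⟩
      show 0 + 1 = k.val - (p - m)
      omega
    · rw [if_neg h1, if_pos h2]
      refine ⟨hjl, Or.inr (Or.inr ?_)⟩
      show 0 + 1 = i.val - (p - m)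
      omega
    · rw [if_neg h1, if_neg h2]
      refine ⟨hjl, ?_⟩
      show (i.val - (p - m) = 0 ∧ k.val - (p - m) = 0) ∨
        i.val - (p - m) + 1 = k.val - (p - m) ∨ k.val - (p - m) + 1 = i.val - (p - m)
      omega
end

section
/- For p ≥ m ≥ 1 and q ≥ s ≥ 1, there is a graph homomorphism from M_p(C_{2q+1}) to M_m(C_{2s+1}). -/
open SimpleGraph

lemma mod_two_mul_eq (x n : ℕ) (hn : 0 < n) (hx : x < 2 * n) :
    x % n = if x < n then x else x - n := by
  rcases Nat.lt_or_ge x n with h | h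
  · rw [Nat.mod_eq_of_lt h, if_pos h]
  · rw [if_neg (by omega), Nat.mod_eq_sub_mod h, Nat.mod_eq_of_lt (by omega)]

/-- For `p ≥ m ≥ 1` and `q ≥ s ≥ 1`, there is a graph homomorphism from
`M_p(C_{2q+1})` to `M_m(C_{2s+1})`. -/
theorem myc_hom_exists (p m q s : ℕ) (hm : 1 ≤ m) (hmp : m ≤ p) (hs : 1 ≤ s) (hsq : s ≤ q) :
    Nonempty (SimpleGraph.Myc p (cycleGraph (2 * q + 1)) →g
              SimpleGraph.Myc m (cycleGraph (2 * s + 1))) := by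
  -- level map
  set fl : Fin (p + 1) → Fin (m + 1) := fun i =>
    ⟨m - min m (p - i.val), by omega⟩ with hfl
  -- cycle map
  set fc : Fin (2 * q + 1) → Fin (2 * s + 1) := fun j =>
    if h : j.val ≤ 2 * s then ⟨j.val, by omega⟩ else ⟨(j.val + 1) % 2, by omega⟩ with hfc
  have hcyc : ∀ u v : Fin (2 * q + 1), (cycleGraph (2 * q + 1)).Adj u v →
      (cycleGraph (2 * s + 1)).Adj (fc u) (fc v) := by
    intro u v huv
    rw [cycleGraph_adj'] at huv ⊢
    rw [Fin.sub_def, Fin.sub_def] at huv ⊢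
    simp only [hfc]
    obtain ⟨u, hu⟩ := u
    obtain ⟨v, hv⟩ := v
    simp only [Fin.val_mk] at huv ⊢
    rw [mod_two_mul_eq _ _ (by omega) (by omega),
        mod_two_mul_eq _ _ (by omega) (by omega)] at huv
    have huv' : v = u + 1 ∨ u = v + 1 ∨ (u = 2*q ∧ v = 0) ∨ (v = 2*q ∧ u = 0) := by
      split_ifs at huv <;> omega
    clear huv
    split <;> split <;> simp only [Fin.val_mk] <;>
      rw [mod_two_mul_eq (n := 2*s+1), mod_two_mul_eq (n := 2*s+1)] <;>
      first
      | (split_ifs <;> omega)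
      | omega
  refine ⟨⟨fun x => x.map (fun z => (fl z.1, fc z.2)), ?_⟩⟩
  rintro (_ | ⟨i, j⟩) (_ | ⟨k, l⟩) h
  · exact h
  · have h' : (k : Fin (p+1)).val = p := h
    show (fl k).val = m
    simp only [hfl]
    omega
  · have h' : (i : Fin (p+1)).val = p := h
    show (fl i).val = m
    simp only [hfl]
    omega
  · obtain ⟨hadj, hlev⟩ := h
    refine ⟨hcyc _ _ hadj, ?_⟩
    simp only [hfl]
    obtain ⟨i, hi⟩ := i
    obtain ⟨k, hk⟩ := k
    simp only at hlev ⊢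
    omega
end

section
/- For all positive integers m, n, s, t, the direct product M_m(C_{2s+1}) × M_n(C_{2t+1}) is not a cover graph. -/
open SimpleGraph

/-! ### Order-theoretic tools for cover graphs -/

section Tools
variable {V : Type*} [PartialOrder V] {H : SimpleGraph V}

open Classical in
/-- Sign of an oriented comparable pair: `1` if `x < y`, `-1` otherwise. -/
noncomputable def esgn (x y : V) : ℤ := if x < y then 1 else -1

lemma esgn_pos {x y : V} (h : x < y) : esgn x y = 1 := by
  classical rw [esgn]; exact if_pos h

lemma esgn_neg {x y : V} (h : y < x) : esgn x y = -1 := by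
  classical rw [esgn]; exact if_neg (asymm h)

lemma edge_comp (hcov : ∀ a b : V, H.Adj a b ↔ (a ⋖ b ∨ b ⋖ a)) {x y : V}
    (h : H.Adj x y) : x < y ∨ y < x :=
  ((hcov x y).1 h).imp CovBy.lt CovBy.lt

/-- No vertex lies strictly between the endpoints of an edge of a cover graph. -/
lemma no_between (hcov : ∀ a b : V, H.Adj a b ↔ (a ⋖ b ∨ b ⋖ a)) {x y z : V}
    (h : H.Adj x y) (h1 : x < z) (h2 : z < y) : False := by
  rcases (hcov x y).1 h with hc | hc
  · exact hc.2 h1 h2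
  · exact absurd (h1.trans h2) (asymm hc.lt)

lemma esgn_anti (hcov : ∀ a b : V, H.Adj a b ↔ (a ⋖ b ∨ b ⋖ a)) {x y : V}
    (h : H.Adj x y) : esgn y x = - esgn x y := by
  rcases edge_comp hcov h with h1 | h1
  · rw [esgn_pos h1, esgn_neg h1]
  · rw [esgn_neg h1, esgn_pos h1]; norm_num

/-- Every 4-cycle of a cover graph has two edges oriented each way. -/
lemma fourcycle (hcov : ∀ a b : V, H.Adj a b ↔ (a ⋖ b ∨ b ⋖ a)) {a b c d : V}
    (h1 : H.Adj a b) (h2 : H.Adj b c) (h3 : H.Adj c d)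
    (h4 : H.Adj d a) : esgn a b + esgn b c + esgn c d + esgn d a = 0 := by
  have bad : ∀ x y z w : V, H.Adj x w → x < y → y < z → z < w → False :=
    fun x y z w h hx hy hz => no_between hcov h hx (hy.trans hz)
  rcases edge_comp hcov h1 with e1 | e1 <;> rcases edge_comp hcov h2 with e2 | e2 <;>
    rcases edge_comp hcov h3 with e3 | e3 <;> rcases edge_comp hcov h4 with e4 | e4 <;>
    first
    | exact (bad _ _ _ _ h4.symm e1 e2 e3).elim
    | exact (bad _ _ _ _ h1.symm e2 e3 e4).elim
    | exact (bad _ _ _ _ h3.symm e4 e1 e2).elim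
    | exact (bad _ _ _ _ h2.symm e3 e4 e1).elim
    | exact (bad _ _ _ _ h4 e3 e2 e1).elim
    | exact (bad _ _ _ _ h1 e4 e3 e2).elim
    | exact (bad _ _ _ _ h2 e1 e4 e3).elim
    | exact (bad _ _ _ _ h3 e2 e1 e4).elim
    | (simp only [esgn_pos e1, esgn_pos e2, esgn_pos e3, esgn_pos e4,
        esgn_neg e1, esgn_neg e2, esgn_neg e3, esgn_neg e4]; norm_num)

/-- The ladder argument: a cover graph admits no "generalized Mycielskian over an odd
closed walk" pattern: levels `0..P` with cyclic index of odd period `A`, cross edges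
between consecutive levels, a cycle at level `0` and an apex `r` over level `P`. -/
lemma ladder (hcov : ∀ a b : V, H.Adj a b ↔ (a ⋖ b ∨ b ⋖ a))
    (A P : ℕ) (hA : A % 2 = 1) (hP : 1 ≤ P)
    (v : ℕ → ℕ → V) (r : V)
    (hper : ∀ i j, v i (j + A) = v i j)
    (H0 : ∀ j, H.Adj (v 0 j) (v 0 (j + 1)))
    (HA : ∀ i, i < P → ∀ j, H.Adj (v i j) (v (i + 1) (j + 1)))
    (HB : ∀ i, i < P → ∀ j, H.Adj (v (i + 1) j) (v i (j + 1)))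
    (HR : ∀ j, H.Adj (v P j) r) : False := by
  have hA1 : 1 ≤ A := by omega
  -- shift-by-one invariance of sums of A-periodic functions
  have shift : ∀ F : ℕ → ℤ, (∀ j, F (j + A) = F j) →
      ∑ j ∈ Finset.range A, F (j + 1) = ∑ j ∈ Finset.range A, F j := by
    intro F hF
    have h1 := Finset.sum_range_succ' F A
    have h2 := Finset.sum_range_succ F A
    have h3 : F A = F 0 := by simpa using hF 0
    linarith
  set S : ℤ := ∑ j ∈ Finset.range A, esgn (v 0 j) (v 0 (j + 1)) with hS
  -- S is odd
  have hodd : S % 2 = 1 := by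
    have h1 : ∀ j ∈ Finset.range A, esgn (v 0 j) (v 0 (j + 1)) % 2 = 1 := by
      intro j _
      rcases edge_comp hcov (H0 j) with h | h
      · rw [esgn_pos h]; rfl
      · rw [esgn_neg h]; rfl
    rw [hS, Finset.sum_int_mod, Finset.sum_congr rfl h1]
    simp only [Finset.sum_const, Finset.card_range, nsmul_eq_mul, mul_one]
    omega
  -- base equation
  have base : ∑ j ∈ Finset.range A,
      (esgn (v 0 j) (v 1 (j + 1)) + esgn (v 1 j) (v 0 (j + 1))) = 2 * S := by
    have e : ∀ j, esgn (v 0 j) (v 1 (j + 1)) + esgn (v 1 (j + 1)) (v 0 (j + 1 + 1))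
        = esgn (v 0 j) (v 0 (j + 1)) + esgn (v 0 (j + 1)) (v 0 (j + 1 + 1)) := by
      intro j
      have fc := fourcycle hcov (H0 j) (H0 (j + 1)) (HB 0 hP (j + 1)).symm (HA 0 hP j).symm
      have a1 := esgn_anti hcov (HB 0 hP (j + 1))
      have a2 := esgn_anti hcov (HA 0 hP j)
      linarith
    have hsum : ∑ j ∈ Finset.range A,
        (esgn (v 0 j) (v 1 (j + 1)) + esgn (v 1 (j + 1)) (v 0 (j + 1 + 1)))
        = ∑ j ∈ Finset.range A,
        (esgn (v 0 j) (v 0 (j + 1)) + esgn (v 0 (j + 1)) (v 0 (j + 1 + 1))) :=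
      Finset.sum_congr rfl (fun j _ => e j)
    rw [Finset.sum_add_distrib, Finset.sum_add_distrib] at hsum
    have s1 : ∑ j ∈ Finset.range A, esgn (v 1 (j + 1)) (v 0 (j + 1 + 1))
        = ∑ j ∈ Finset.range A, esgn (v 1 j) (v 0 (j + 1)) := by
      apply shift (fun j => esgn (v 1 j) (v 0 (j + 1)))
      intro j
      rw [hper, show j + A + 1 = (j + 1) + A by omega, hper]
    have s2 : ∑ j ∈ Finset.range A, esgn (v 0 (j + 1)) (v 0 (j + 1 + 1))
        = ∑ j ∈ Finset.range A, esgn (v 0 j) (v 0 (j + 1)) := by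
      apply shift (fun j => esgn (v 0 j) (v 0 (j + 1)))
      intro j
      rw [hper, show j + A + 1 = (j + 1) + A by omega, hper]
    rw [s1, s2] at hsum
    rw [Finset.sum_add_distrib]
    linarith
  -- inductive step
  have step : ∀ i, i + 1 < P →
      ∑ j ∈ Finset.range A, (esgn (v i j) (v (i + 1) (j + 1)) + esgn (v (i + 1) j) (v i (j + 1)))
      = ∑ j ∈ Finset.range A, (esgn (v (i + 1) j) (v (i + 2) (j + 1))
          + esgn (v (i + 2) j) (v (i + 1) (j + 1))) := by
    intro i hi
    have hi1 : i < P := by omega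
    have e : ∀ j, esgn (v (i + 1) j) (v i (j + 1)) + esgn (v i (j + 1)) (v (i + 1) (j + 1 + 1))
        = esgn (v (i + 1) j) (v (i + 2) (j + 1))
          + esgn (v (i + 2) (j + 1)) (v (i + 1) (j + 1 + 1)) := by
      intro j
      have fc := fourcycle hcov (HB i hi1 j) (HA i hi1 (j + 1))
        (HB (i + 1) hi (j + 1)).symm (HA (i + 1) hi j).symm
      have a1 := esgn_anti hcov (HB (i + 1) hi (j + 1))
      have a2 := esgn_anti hcov (HA (i + 1) hi j)
      linarith
    have hsum := Finset.sum_congr rfl (fun j (_ : j ∈ Finset.range A) => e j)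
    rw [Finset.sum_add_distrib, Finset.sum_add_distrib] at hsum
    have s1 : ∑ j ∈ Finset.range A, esgn (v i (j + 1)) (v (i + 1) (j + 1 + 1))
        = ∑ j ∈ Finset.range A, esgn (v i j) (v (i + 1) (j + 1)) := by
      apply shift (fun j => esgn (v i j) (v (i + 1) (j + 1)))
      intro j
      rw [hper, show j + A + 1 = (j + 1) + A by omega, hper]
    have s2 : ∑ j ∈ Finset.range A, esgn (v (i + 2) (j + 1)) (v (i + 1) (j + 1 + 1))
        = ∑ j ∈ Finset.range A, esgn (v (i + 2) j) (v (i + 1) (j + 1)) := by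
      apply shift (fun j => esgn (v (i + 2) j) (v (i + 1) (j + 1)))
      intro j
      rw [hper, show j + A + 1 = (j + 1) + A by omega, hper]
    rw [s1, s2] at hsum
    rw [Finset.sum_add_distrib, Finset.sum_add_distrib]
    linarith
  -- all levels carry 2S
  have key : ∀ i, i < P →
      ∑ j ∈ Finset.range A, (esgn (v i j) (v (i + 1) (j + 1)) + esgn (v (i + 1) j) (v i (j + 1)))
      = 2 * S := by
    intro i
    induction i with
    | zero => intro _; exact base
    | succ i ih =>
      intro hi
      have h2 := ih (by omega)
      rw [step i hi] at h2
      exact h2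
  -- top equation: level P sums to 0
  obtain ⟨Q, rfl⟩ : ∃ Q, P = Q + 1 := ⟨P - 1, by omega⟩
  have hQ : Q < Q + 1 := by omega
  have top : ∑ j ∈ Finset.range A,
      (esgn (v Q j) (v (Q + 1) (j + 1)) + esgn (v (Q + 1) j) (v Q (j + 1))) = 0 := by
    have e : ∀ j, esgn (v (Q + 1) j) (v Q (j + 1)) + esgn (v Q (j + 1)) (v (Q + 1) (j + 1 + 1))
        = esgn (v (Q + 1) j) r - esgn (v (Q + 1) (j + 1 + 1)) r := by
      intro j
      have fc := fourcycle hcov (HB Q hQ j) (HA Q hQ (j + 1))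
        (HR (j + 1 + 1)) (HR j).symm
      have a1 := esgn_anti hcov (HR j)
      linarith
    have hsum := Finset.sum_congr rfl (fun j (_ : j ∈ Finset.range A) => e j)
    rw [Finset.sum_add_distrib, Finset.sum_sub_distrib] at hsum
    have s1 : ∑ j ∈ Finset.range A, esgn (v Q (j + 1)) (v (Q + 1) (j + 1 + 1))
        = ∑ j ∈ Finset.range A, esgn (v Q j) (v (Q + 1) (j + 1)) := by
      apply shift (fun j => esgn (v Q j) (v (Q + 1) (j + 1)))
      intro j
      rw [hper, show j + A + 1 = (j + 1) + A by omega, hper]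
    have perρ : ∀ j, esgn (v (Q + 1) (j + A)) r = esgn (v (Q + 1) j) r := by
      intro j; rw [hper]
    have s2 : ∑ j ∈ Finset.range A, esgn (v (Q + 1) (j + 1 + 1)) r
        = ∑ j ∈ Finset.range A, esgn (v (Q + 1) j) r := by
      have t1 : ∑ j ∈ Finset.range A, esgn (v (Q + 1) (j + 1 + 1)) r
          = ∑ j ∈ Finset.range A, esgn (v (Q + 1) (j + 1)) r := by
        apply shift (fun j => esgn (v (Q + 1) (j + 1)) r)
        intro j
        rw [show j + A + 1 = (j + 1) + A by omega, hper]
      rw [t1]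
      exact shift (fun j => esgn (v (Q + 1) j) r) perρ
    rw [s1, s2] at hsum
    rw [Finset.sum_add_distrib]
    linarith
  have := key Q hQ
  rw [top] at this
  omega

end Tools

/-! ### Instantiation inside a generalized Mycielskian of an odd cycle -/

section Inst

/-- Fold a closed walk of odd length `A` onto the odd cycle `C_{2s+1}`:
go around the cycle once, then oscillate between `0` and `1`. -/
def wfold (s k : ℕ) : ℕ := if k < 2 * s + 1 then k else if (k - (2 * s + 1)) % 2 = 0 then 0 else 1

lemma wfold_lt {s : ℕ} (hs : 1 ≤ s) (k : ℕ) : wfold s k < 2 * s + 1 := by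
  unfold wfold; split_ifs <;> omega

def cycv {s : ℕ} (hs : 1 ≤ s) (A j : ℕ) : Fin (2 * s + 1) := ⟨wfold s (j % A), wfold_lt hs _⟩

lemma cyc_adj_base {N : ℕ} (hN : 3 ≤ N) (u w : Fin N)
    (h : w.val = u.val + 1 ∨ (u.val + 1 = N ∧ w.val = 0)) : (cycleGraph N).Adj u w := by
  rw [cycleGraph_adj']
  right
  rw [Fin.sub_def]
  show (N - u.val + w.val) % N = 1
  have hu := u.isLt
  have hw := w.isLt
  rcases h with h | ⟨h1, h2⟩
  · have : N - u.val + w.val = N + 1 := by omega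
    rw [this, Nat.add_mod_left, Nat.mod_eq_of_lt (by omega)]
  · have : N - u.val + w.val = 1 := by omega
    rw [this, Nat.mod_eq_of_lt (by omega)]

lemma cyc_adj_of {N : ℕ} (hN : 3 ≤ N) (u w : Fin N)
    (h : w.val = u.val + 1 ∨ u.val = w.val + 1 ∨ (u.val + 1 = N ∧ w.val = 0)
      ∨ (w.val + 1 = N ∧ u.val = 0)) : (cycleGraph N).Adj u w := by
  rcases h with h | h | h | h
  · exact cyc_adj_base hN u w (Or.inl h)
  · exact (cyc_adj_base hN w u (Or.inl h)).symm
  · exact cyc_adj_base hN u w (Or.inr h)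
  · exact (cyc_adj_base hN w u (Or.inr h)).symm

lemma cycv_adj {s : ℕ} (hs : 1 ≤ s) {A : ℕ} (hA : 2 * s + 1 ≤ A) (hAodd : A % 2 = 1) (j : ℕ) :
    (cycleGraph (2 * s + 1)).Adj (cycv hs A j) (cycv hs A (j + 1)) := by
  have hA3 : 3 ≤ A := by omega
  have hk : j % A < A := Nat.mod_lt _ (by omega)
  have hmod : (j + 1) % A = (j % A + 1) % A := by
    conv_lhs => rw [Nat.add_mod]
    rw [Nat.mod_eq_of_lt (show 1 < A by omega)]
  apply cyc_adj_of (by omega)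
  show wfold s ((j + 1) % A) = wfold s (j % A) + 1 ∨
    wfold s (j % A) = wfold s ((j + 1) % A) + 1 ∨
    (wfold s (j % A) + 1 = 2 * s + 1 ∧ wfold s ((j + 1) % A) = 0) ∨
    (wfold s ((j + 1) % A) + 1 = 2 * s + 1 ∧ wfold s (j % A) = 0)
  rcases Nat.lt_or_ge (j % A + 1) A with hlt | hge
  · rw [hmod, Nat.mod_eq_of_lt hlt]
    unfold wfold
    split_ifs <;> omega
  · have hEq : j % A + 1 = A := by omega
    rw [hmod, hEq, Nat.mod_self]
    unfold wfold
    split_ifs <;> omega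

lemma cycv_per {s : ℕ} (hs : 1 ≤ s) (A j : ℕ) : cycv hs A (j + A) = cycv hs A j := by
  unfold cycv
  congr 1
  rw [Nat.add_mod_right]

/-- The level folding map `{0..P} → {0..m}`: wait at level `0`, then climb. -/
def mlvl (m P i : ℕ) : ℕ := min m (i - (P - m))

def mycv (m P : ℕ) {s : ℕ} (hs : 1 ≤ s) (A i j : ℕ) : Option (Fin (m + 1) × Fin (2 * s + 1)) :=
  some (⟨mlvl m P i, by unfold mlvl; omega⟩, cycv hs A j)

variable {m P s A : ℕ}

lemma mycv_per (hs : 1 ≤ s) (i j : ℕ) : mycv m P hs A i (j + A) = mycv m P hs A i j := by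
  unfold mycv
  rw [cycv_per]

lemma mycv0 (hs : 1 ≤ s) (hA : 2 * s + 1 ≤ A) (hAodd : A % 2 = 1) (j : ℕ) :
    (SimpleGraph.Myc m (cycleGraph (2 * s + 1))).Adj (mycv m P hs A 0 j)
      (mycv m P hs A 0 (j + 1)) := by
  refine ⟨cycv_adj hs hA hAodd j, ?_⟩
  left
  constructor <;> (show mlvl m P 0 = 0; unfold mlvl; omega)

lemma mycvA (hm : 1 ≤ m) (hmP : m ≤ P) (hs : 1 ≤ s) (hA : 2 * s + 1 ≤ A) (hAodd : A % 2 = 1)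
    (i : ℕ) (hi : i < P) (j : ℕ) :
    (SimpleGraph.Myc m (cycleGraph (2 * s + 1))).Adj (mycv m P hs A i j)
      (mycv m P hs A (i + 1) (j + 1)) := by
  refine ⟨cycv_adj hs hA hAodd j, ?_⟩
  show (mlvl m P i = 0 ∧ mlvl m P (i + 1) = 0) ∨ mlvl m P i + 1 = mlvl m P (i + 1)
    ∨ mlvl m P (i + 1) + 1 = mlvl m P i
  unfold mlvl
  omega

lemma mycvB (hm : 1 ≤ m) (hmP : m ≤ P) (hs : 1 ≤ s) (hA : 2 * s + 1 ≤ A) (hAodd : A % 2 = 1)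
    (i : ℕ) (hi : i < P) (j : ℕ) :
    (SimpleGraph.Myc m (cycleGraph (2 * s + 1))).Adj (mycv m P hs A (i + 1) j)
      (mycv m P hs A i (j + 1)) := by
  refine ⟨cycv_adj hs hA hAodd j, ?_⟩
  show (mlvl m P (i + 1) = 0 ∧ mlvl m P i = 0) ∨ mlvl m P (i + 1) + 1 = mlvl m P i
    ∨ mlvl m P i + 1 = mlvl m P (i + 1)
  unfold mlvl
  omega

lemma mycvR (hm : 1 ≤ m) (hmP : m ≤ P) (hs : 1 ≤ s) (j : ℕ) :
    (SimpleGraph.Myc m (cycleGraph (2 * s + 1))).Adj (mycv m P hs A P j) none := by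
  show mlvl m P P = m
  unfold mlvl
  omega

end Inst

/-- For all positive integers `m, n, s, t`, the direct product
`M_m(C_{2s+1}) × M_n(C_{2t+1})` is not a cover graph. -/
theorem tensorProd_myc_odd_cycles_not_isCoverGraph (m n s t : ℕ)
    (hm : 1 ≤ m) (hn : 1 ≤ n) (hs : 1 ≤ s) (ht : 1 ≤ t) :
    ¬ ((SimpleGraph.Myc m (cycleGraph (2 * s + 1))).tensorProd
        (SimpleGraph.Myc n (cycleGraph (2 * t + 1)))).IsCoverGraph := by
  rintro ⟨p, hp⟩
  letI := p
  set P := max m n with hP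
  set A := 2 * max s t + 1 with hA
  have hmP : m ≤ P := le_max_left _ _
  have hnP : n ≤ P := le_max_right _ _
  have hAs : 2 * s + 1 ≤ A := by omega
  have hAt : 2 * t + 1 ≤ A := by omega
  have hAodd : A % 2 = 1 := by omega
  exact ladder (H := (SimpleGraph.Myc m (cycleGraph (2 * s + 1))).tensorProd
      (SimpleGraph.Myc n (cycleGraph (2 * t + 1))))
    (fun a b => hp a b)
    A P hAodd (by omega)
    (fun i j => (mycv m P hs A i j, mycv n P ht A i j))
    (none, none)
    (fun i j => by simp only [mycv_per])
    (fun j => ⟨mycv0 hs hAs hAodd j, mycv0 ht hAt hAodd j⟩)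
    (fun i hi j => ⟨mycvA hm hmP hs hAs hAodd i hi j, mycvA hn hnP ht hAt hAodd i hi j⟩)
    (fun i hi j => ⟨mycvB hm hmP hs hAs hAodd i hi j, mycvB hn hnP ht hAt hAodd i hi j⟩)
    (fun j => ⟨mycvR hm hmP hs j, mycvR hn hnP ht j⟩)
end

section
/- For s > 1 and m ≥ 1, the circular chromatic number of M_m(C_{2s+1}) equals 4. -/
open SimpleGraph

open scoped Classical in
/-- `D` is an acyclic orientation of `G`: every arc is an edge, each edge is oriented in exactly
one direction, and there are no directed cycles. -/
def SimpleGraph.IsAcyclicOrientation {V : Type*} (G : SimpleGraph V) (D : V → V → Prop) : Prop :=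
  (∀ a b, D a b → G.Adj a b) ∧ (∀ a b, G.Adj a b → (D a b ↔ ¬ D b a)) ∧
    ∀ a, ¬ Relation.TransGen D a a

open scoped Classical in
/-- The number of forward arcs of the cycle `C` with respect to the orientation `D`. -/
noncomputable def SimpleGraph.fwdArcs {V : Type*} (G : SimpleGraph V) (D : V → V → Prop)
    {v : V} (C : G.Walk v v) : ℕ :=
  (C.darts.filter fun d => decide (D d.toProd.1 d.toProd.2)).length

open scoped Classical in
/-- The number of backward arcs of the cycle `C` with respect to the orientation `D`. -/
noncomputable def SimpleGraph.bwdArcs {V : Type*} (G : SimpleGraph V) (D : V → V → Prop)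
    {v : V} (C : G.Walk v v) : ℕ :=
  (C.darts.filter fun d => decide (D d.toProd.2 d.toProd.1)).length

/-- The imbalance `Imb(D)` of an orientation `D`: the maximum over all cycles `C` of
`max (|C|/|(C,D)⁺|) (|C|/|(C,D)⁻|)`, with the convention that it is `2` if `G` has no cycles. -/
noncomputable def SimpleGraph.Imb {V : Type*} (G : SimpleGraph V) (D : V → V → Prop) : ℝ :=
  sSup (insert 2 {x : ℝ | ∃ (v : V) (C : G.Walk v v), C.IsCycle ∧
    x = max ((C.length : ℝ) / (G.fwdArcs D C : ℝ)) ((C.length : ℝ) / (G.bwdArcs D C : ℝ))})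

/-- The circular chromatic number, via the Goddyn–Tarsi–Zhang characterization:
the minimum imbalance over all acyclic orientations. -/
noncomputable def SimpleGraph.circChrom {V : Type*} (G : SimpleGraph V) : ℝ :=
  sInf {x : ℝ | ∃ D : V → V → Prop, G.IsAcyclicOrientation D ∧ x = G.Imb D}



namespace MycielskiAux

open SimpleGraph Relation
open scoped Classical

private lemma tele_fwd {V : Type*} {G : SimpleGraph V} (col : V → ℤ) {u v : V} (p : G.Walk u v) :
    (p.darts.map (fun d => col d.toProd.2 - col d.toProd.1)).sum = col v - col u := by
  induction p with
  | nil => simp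
  | cons h q ih =>
    rw [Walk.darts_cons, List.map_cons, List.sum_cons, ih]
    ring

private lemma tele_bwd {V : Type*} {G : SimpleGraph V} (col : V → ℤ) {u v : V} (p : G.Walk u v) :
    (p.darts.map (fun d => col d.toProd.1 - col d.toProd.2)).sum = col u - col v := by
  induction p with
  | nil => simp
  | cons h q ih =>
    rw [Walk.darts_cons, List.map_cons, List.sum_cons, ih]
    ring

private lemma filter_bound {α : Type*} (g : α → ℤ) (p : α → Bool) :
    ∀ l : List α, (∀ a ∈ l, p a = true → 1 ≤ g a) → (∀ a ∈ l, -3 ≤ g a) →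
      ((l.filter p).length : ℤ) - 3 * ((l.filter (fun a => !(p a))).length : ℤ) ≤ (l.map g).sum
  | [], _, _ => by simp
  | a :: l, h1, h2 => by
    have ih := filter_bound g p l (fun x hx hp => h1 x (List.mem_cons_of_mem _ hx) hp)
      (fun x hx => h2 x (List.mem_cons_of_mem _ hx))
    have h2a := h2 a List.mem_cons_self
    rw [List.map_cons, List.sum_cons]
    rcases Bool.eq_false_or_eq_true (p a) with hp | hp
    · have h1a := h1 a List.mem_cons_self hp
      have e1 : (a :: l).filter p = a :: l.filter p := by simp [List.filter_cons, hp]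
      have e2 : (a :: l).filter (fun a => !(p a)) = l.filter (fun a => !(p a)) := by
        simp [List.filter_cons, hp]
      rw [e1, e2, List.length_cons]
      push_cast
      omega
    · have e1 : (a :: l).filter p = l.filter p := by simp [List.filter_cons, hp]
      have e2 : (a :: l).filter (fun a => !(p a)) = a :: l.filter (fun a => !(p a)) := by
        simp [List.filter_cons, hp]
      rw [e1, e2, List.length_cons]
      push_cast
      omega

private lemma cycle_length_le {V : Type*} [Fintype V] {G : SimpleGraph V} {v : V}
    {C : G.Walk v v} (hC : C.IsCycle) : C.length ≤ Fintype.card V := by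
  have h1 : C.support.tail.length ≤ Fintype.card V := hC.support_nodup.length_le_card
  have h2 : C.support.length = C.length + 1 := Walk.length_support C
  have h3 : C.support.tail.length = C.support.length - 1 := List.length_tail
  omega

private lemma isCycle_quad {V : Type*} {G : SimpleGraph V} {a b c d : V}
    (hab : G.Adj a b) (hbc : G.Adj b c) (hcd : G.Adj c d) (hda : G.Adj d a)
    (hac : a ≠ c) (hbd : b ≠ d) :
    (Walk.cons hab (Walk.cons hbc (Walk.cons hcd (Walk.cons hda Walk.nil)))).IsCycle := by
  have nab := hab.ne
  have nbc := hbc.ne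
  have ncd := hcd.ne
  have nda := hda.ne
  have nba := hab.ne'
  have ncb := hbc.ne'
  have ndc := hcd.ne'
  have nad := hda.ne'
  have nca := hac.symm
  have ndb := hbd.symm
  rw [Walk.isCycle_def, Walk.isTrail_def]
  refine ⟨?_, by simp, ?_⟩
  · simp only [Walk.edges_cons, Walk.edges_nil, List.nodup_cons, List.mem_cons,
      List.not_mem_nil, or_false, List.nodup_nil, and_true, Sym2.eq_iff]
    push_neg
    tauto
  · simp only [Walk.support_cons, Walk.support_nil, List.tail_cons, List.nodup_cons,
      List.mem_cons, List.not_mem_nil, or_false, List.nodup_nil, and_true,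
      List.mem_singleton]
    push_neg
    tauto

private theorem coloring_orientation_bound {V : Type*} (G : SimpleGraph V) (col : V → ℤ)
    (hb : ∀ x, 0 ≤ col x ∧ col x ≤ 3) (hpr : ∀ x y, G.Adj x y → col x ≠ col y) :
    G.IsAcyclicOrientation (fun x y => G.Adj x y ∧ col x < col y) ∧
      G.Imb (fun x y => G.Adj x y ∧ col x < col y) ≤ 4 := by
  set D := fun x y : V => G.Adj x y ∧ col x < col y with hD
  constructor
  · refine ⟨fun a b h => h.1, fun a b hab => ?_, fun a hTG => ?_⟩
    · constructor
      · intro h1 h2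
        exact absurd h2.2 (not_lt.mpr h1.2.le)
      · intro h1
        refine ⟨hab, ?_⟩
        rcases lt_or_gt_of_ne (hpr a b hab) with h | h
        · exact h
        · exact absurd ⟨hab.symm, h⟩ h1
    · have h2 : Relation.TransGen (fun x y : V => col x < col y) a a :=
        by
          have key : ∀ x y, Relation.TransGen D x y →
              Relation.TransGen (fun x y : V => col x < col y) x y := by
            intro x y h
            induction h with
            | single h => exact Relation.TransGen.single h.2
            | tail _ h ih => exact Relation.TransGen.tail ih h.2
          exact key a a hTG
      rw [@Relation.transGen_eq_self _ _
        ⟨fun x y z (h1 : col x < col y) (h2 : col y < col z) => lt_trans h1 h2⟩] at h2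
      exact lt_irrefl _ h2
  · unfold SimpleGraph.Imb
    apply Real.sSup_le
    · rintro x (rfl | ⟨v, C, hC, rfl⟩)
      · norm_num
      · have hadj : ∀ d : G.Dart, d ∈ C.darts → G.Adj d.toProd.1 d.toProd.2 := fun d _ => d.adj
        have htel1 : (C.darts.map (fun d => col d.toProd.2 - col d.toProd.1)).sum = 0 := by
          rw [tele_fwd col C]; ring
        have htel2 : (C.darts.map (fun d => col d.toProd.1 - col d.toProd.2)).sum = 0 := by
          rw [tele_bwd col C]; ring
        have key1 : ((C.darts.filter (fun d => decide (D d.toProd.1 d.toProd.2))).length : ℤ)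
            - 3 * ((C.darts.filter (fun d => !(decide (D d.toProd.1 d.toProd.2)))).length : ℤ)
            ≤ (C.darts.map (fun d => col d.toProd.2 - col d.toProd.1)).sum := by
          refine filter_bound (fun d => col d.toProd.2 - col d.toProd.1)
            (fun d => decide (D d.toProd.1 d.toProd.2)) C.darts ?_ ?_
          · intro d hd h
            have h' := of_decide_eq_true h
            have hlt := h'.2
            show 1 ≤ col d.toProd.2 - col d.toProd.1
            omega
          · intro d _
            have b1 := hb d.toProd.1
            have b2 := hb d.toProd.2
            show -3 ≤ col d.toProd.2 - col d.toProd.1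
            omega
        have key2 : ((C.darts.filter (fun d => decide (D d.toProd.2 d.toProd.1))).length : ℤ)
            - 3 * ((C.darts.filter (fun d => !(decide (D d.toProd.2 d.toProd.1)))).length : ℤ)
            ≤ (C.darts.map (fun d => col d.toProd.1 - col d.toProd.2)).sum := by
          refine filter_bound (fun d => col d.toProd.1 - col d.toProd.2)
            (fun d => decide (D d.toProd.2 d.toProd.1)) C.darts ?_ ?_
          · intro d hd h
            have h' := of_decide_eq_true h
            have hlt := h'.2
            show 1 ≤ col d.toProd.1 - col d.toProd.2
            omega
          · intro d _
            have b1 := hb d.toProd.1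
            have b2 := hb d.toProd.2
            show -3 ≤ col d.toProd.1 - col d.toProd.2
            omega
        rw [htel1] at key1
        rw [htel2] at key2
        have hcong1 : ∀ d ∈ C.darts,
            (!(decide (D d.toProd.1 d.toProd.2))) = decide (D d.toProd.2 d.toProd.1) := by
          intro d hd
          rw [← decide_not]
          apply decide_eq_decide.mpr
          constructor
          · intro h
            refine ⟨(hadj d hd).symm, ?_⟩
            rcases lt_or_gt_of_ne (hpr _ _ (hadj d hd)) with h' | h'
            · exact absurd ⟨hadj d hd, h'⟩ h
            · exact h'
          · intro h h'
            exact absurd h.2 (not_lt.mpr h'.2.le)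
        have hcong2 : ∀ d ∈ C.darts,
            (!(decide (D d.toProd.2 d.toProd.1))) = decide (D d.toProd.1 d.toProd.2) := by
          intro d hd
          rw [← decide_not]
          apply decide_eq_decide.mpr
          constructor
          · intro h
            refine ⟨hadj d hd, ?_⟩
            rcases lt_or_gt_of_ne (hpr _ _ (hadj d hd)) with h' | h'
            · exact h'
            · exact absurd ⟨(hadj d hd).symm, h'⟩ h
          · intro h h'
            exact absurd h.2 (not_lt.mpr h'.2.le)
        have hfilt1 : C.darts.filter (fun d => !(decide (D d.toProd.1 d.toProd.2)))
            = C.darts.filter (fun d => decide (D d.toProd.2 d.toProd.1)) :=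
          List.filter_congr hcong1
        have hfilt2 : C.darts.filter (fun d => !(decide (D d.toProd.2 d.toProd.1)))
            = C.darts.filter (fun d => decide (D d.toProd.1 d.toProd.2)) :=
          List.filter_congr hcong2
        have hsplit : C.darts.length
            = (C.darts.filter (fun d => decide (D d.toProd.1 d.toProd.2))).length
              + (C.darts.filter (fun d => !(decide (D d.toProd.1 d.toProd.2)))).length :=
          List.length_eq_length_filter_add (l := C.darts) (fun d => decide (D d.toProd.1 d.toProd.2))
        have hdl : C.darts.length = C.length := Walk.length_darts C
        have hfb : G.fwdArcs D C
            = (C.darts.filter (fun d => decide (D d.toProd.1 d.toProd.2))).length := by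
          unfold SimpleGraph.fwdArcs
          congr 1
          apply List.filter_congr
          intro d _
          exact decide_eq_decide.mpr Iff.rfl
        have hbb : G.bwdArcs D C
            = (C.darts.filter (fun d => decide (D d.toProd.2 d.toProd.1))).length := by
          unfold SimpleGraph.bwdArcs
          congr 1
          apply List.filter_congr
          intro d _
          exact decide_eq_decide.mpr Iff.rfl
        have hF : (C.length : ℤ) ≤ 4 * (G.fwdArcs D C : ℤ) := by
          rw [hfb]
          rw [hfilt1] at hsplit
          rw [hfilt2] at key2
          omega
        have hB : (C.length : ℤ) ≤ 4 * (G.bwdArcs D C : ℤ) := by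
          rw [hbb]
          rw [hfilt1] at key1 hsplit
          omega
        refine max_le ?_ ?_
        · rcases Nat.eq_zero_or_pos (G.fwdArcs D C) with h0 | h0
          · rw [h0]
            norm_num
          · rw [div_le_iff₀ (by exact_mod_cast h0)]
            calc ((C.length : ℕ) : ℝ) ≤ ((4 * G.fwdArcs D C : ℤ) : ℝ) := by exact_mod_cast hF
              _ = 4 * (G.fwdArcs D C : ℝ) := by push_cast; ring
        · rcases Nat.eq_zero_or_pos (G.bwdArcs D C) with h0 | h0
          · rw [h0]
            norm_num
          · rw [div_le_iff₀ (by exact_mod_cast h0)]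
            calc ((C.length : ℕ) : ℝ) ≤ ((4 * G.bwdArcs D C : ℤ) : ℝ) := by exact_mod_cast hB
              _ = 4 * (G.bwdArcs D C : ℝ) := by push_cast; ring
    · norm_num


private theorem myc_upper (m n : ℕ) (hm : 1 ≤ m) (hn : 5 ≤ n) (hodd : n % 2 = 1) :
    ∃ D : Option (Fin (m+1) × Fin n) → Option (Fin (m+1) × Fin n) → Prop,
      (Myc m (cycleGraph n)).IsAcyclicOrientation D ∧ (Myc m (cycleGraph n)).Imb D ≤ 4 := by
  haveI : NeZero n := ⟨by omega⟩
  have subval : ∀ j l : Fin n, (j - l).val = 1 →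
      (j.val = l.val + 1 ∨ (l.val = n - 1 ∧ j.val = 0)) := by
    intro j l h
    have h' : ((n - l.val) + j.val) % n = 1 := h
    have hj := j.isLt
    have hl := l.isLt
    rcases Nat.lt_or_ge ((n - l.val) + j.val) n with h1 | h1
    · rw [Nat.mod_eq_of_lt h1] at h'
      omega
    · rw [Nat.mod_eq_sub_mod h1, Nat.mod_eq_of_lt (by omega)] at h'
      omega
  set col : Option (Fin (m+1) × Fin n) → ℤ := fun x =>
    match x with
    | none => 0
    | some (i, j) => if i.val = m then 3 else if j.val = n - 1 then 2 else (j.val % 2 : ℤ)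
    with hcol
  have hbnd : ∀ x, 0 ≤ col x ∧ col x ≤ 3 := by
    rintro (_ | ⟨i, j⟩)
    · simp [hcol]
    · simp only [hcol]
      split_ifs <;> constructor <;> omega
  have hproper : ∀ x y, (Myc m (cycleGraph n)).Adj x y → col x ≠ col y := by
    rintro (_ | ⟨i, j⟩) (_ | ⟨k, l⟩) hxy
    · exact hxy.elim
    · have hk : k.val = m := hxy
      simp [hcol, hk]
    · have hk : i.val = m := hxy
      simp [hcol, hk]
    · obtain ⟨hjl, hlev⟩ := hxy
      have hvals : l.val = j.val + 1 ∨ j.val = l.val + 1 ∨ (l.val = n - 1 ∧ j.val = 0)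
          ∨ (j.val = n - 1 ∧ l.val = 0) := by
        rw [cycleGraph_adj'] at hjl
        rcases hjl with h | h
        · rcases subval j l h with h' | h'
          · right; left; exact h'
          · right; right; left; exact h'
        · rcases subval l j h with h' | h'
          · left; exact h'
          · right; right; right; exact h'
      have hi := i.isLt
      have hk := k.isLt
      have hj := j.isLt
      have hl := l.isLt
      simp only [hcol]
      rcases hlev with ⟨e1, e2⟩ | e | e <;>
        rcases hvals with h | h | ⟨e1', e2'⟩ | ⟨e1', e2'⟩ <;>
        split_ifs <;> omega
  obtain ⟨hAcy, hImb⟩ := coloring_orientation_bound (Myc m (cycleGraph n)) col hbnd hproper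
  exact ⟨_, hAcy, hImb⟩

set_option maxHeartbeats 1000000 in
private theorem myc_lower (m n : ℕ) (hm : 1 ≤ m) (hn : 5 ≤ n) (hodd : n % 2 = 1)
    (D : Option (Fin (m+1) × Fin n) → Option (Fin (m+1) × Fin n) → Prop)
    (hD : (Myc m (cycleGraph n)).IsAcyclicOrientation D) :
    (4 : ℝ) ≤ (Myc m (cycleGraph n)).Imb D := by
  haveI : NeZero n := ⟨by omega⟩
  obtain ⟨hDadj, hDor, hDacyc⟩ := hD
  by_contra hcon
  push_neg at hcon
  unfold SimpleGraph.Imb at hcon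
  have hbdd : BddAbove (insert (2:ℝ) {x : ℝ | ∃ (v : Option (Fin (m+1) × Fin n))
      (C : (Myc m (cycleGraph n)).Walk v v), C.IsCycle ∧
      x = max ((C.length : ℝ) / ((Myc m (cycleGraph n)).fwdArcs D C : ℝ))
        ((C.length : ℝ) / ((Myc m (cycleGraph n)).bwdArcs D C : ℝ))}) := by
    refine ⟨max 2 (Fintype.card (Option (Fin (m+1) × Fin n))), ?_⟩
    rintro x (rfl | ⟨v, C, hC, rfl⟩)
    · exact le_max_left _ _
    · refine le_trans ?_ (le_max_right _ _)
      have hlen : (C.length : ℝ) ≤ (Fintype.card (Option (Fin (m+1) × Fin n)) : ℝ) := by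
        exact_mod_cast cycle_length_le hC
      have h0 : (0:ℝ) ≤ (C.length : ℝ) := by positivity
      have hdiv : ∀ k : ℕ,
          (C.length : ℝ) / (k : ℝ) ≤ (Fintype.card (Option (Fin (m+1) × Fin n)) : ℝ) := by
        intro k
        rcases Nat.eq_zero_or_pos k with h | h
        · subst h
          simp
          positivity
        · exact le_trans (div_le_self h0 (by exact_mod_cast h)) hlen
      exact max_le (hdiv _) (hdiv _)
  set ω : Option (Fin (m+1) × Fin n) → Option (Fin (m+1) × Fin n) → ℤ :=
    fun x y => if D x y then 1 else -1 with hω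
  have ωanti : ∀ x y, (Myc m (cycleGraph n)).Adj x y → ω y x = - ω x y := by
    intro x y hxy
    by_cases h : D x y
    · have h' : ¬ D y x := (hDor x y hxy).mp h
      simp [hω, h, h']
    · have h' : D y x := (hDor y x hxy.symm).mpr h
      simp [hω, h, h']
  have sq : ∀ a b c d, (Myc m (cycleGraph n)).Adj a b → (Myc m (cycleGraph n)).Adj b c →
      (Myc m (cycleGraph n)).Adj c d → (Myc m (cycleGraph n)).Adj d a → a ≠ c → b ≠ d →
      ω a b + ω b c + ω c d + ω d a = 0 := by
    intro a b c d hab hbc hcd hda hac hbd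
    have hcyc := isCycle_quad hab hbc hcd hda hac hbd
    have iba : D b a ↔ ¬ D a b := hDor b a hab.symm
    have icb : D c b ↔ ¬ D b c := hDor c b hbc.symm
    have idc : D d c ↔ ¬ D c d := hDor d c hcd.symm
    have iad : D a d ↔ ¬ D d a := hDor a d hda.symm
    have hdarts : (Walk.cons hab (Walk.cons hbc (Walk.cons hcd (Walk.cons hda Walk.nil)))).darts
        = [⟨(a,b),hab⟩, ⟨(b,c),hbc⟩, ⟨(c,d),hcd⟩, ⟨(d,a),hda⟩] := rfl
    have hlen4 : (Walk.cons hab (Walk.cons hbc (Walk.cons hcd (Walk.cons hda Walk.nil)))).length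
        = 4 := rfl
    by_cases h1 : D a b <;> by_cases h2 : D b c <;> by_cases h3 : D c d <;> by_cases h4 : D d a
    all_goals first
      | (exact absurd (Relation.TransGen.tail (Relation.TransGen.tail (Relation.TransGen.tail
          (Relation.TransGen.single h1) h2) h3) h4) (hDacyc a))
      | (exact absurd (Relation.TransGen.tail (Relation.TransGen.tail (Relation.TransGen.tail
          (Relation.TransGen.single (iad.mpr h4)) (idc.mpr h3)) (icb.mpr h2)) (iba.mpr h1))
          (hDacyc a))
      | (norm_num [hω, h1, h2, h3, h4]; done)
      | (exact absurd (le_csSup hbdd (Set.mem_insert_of_mem _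
          ⟨a, Walk.cons hab (Walk.cons hbc (Walk.cons hcd (Walk.cons hda Walk.nil))), hcyc, by
            unfold SimpleGraph.fwdArcs SimpleGraph.bwdArcs
            rw [hdarts, hlen4]
            norm_num [List.filter_cons, h1, h2, h3, h4, iba, icb, idc, iad, max_def]⟩))
          (not_le.mpr hcon))
  -- the level vertices
  set vt : ℕ → Fin n → Option (Fin (m+1) × Fin n) :=
    fun i j => some (⟨i % (m+1), Nat.mod_lt _ (Nat.succ_pos m)⟩, j) with hvt
  have hmod : ∀ i, i ≤ m → i % (m+1) = i := fun i hi => Nat.mod_eq_of_lt (by omega)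
  have cadj : ∀ j : Fin n, (cycleGraph n).Adj j (j + 1) := by
    intro j
    rw [cycleGraph_adj']
    right
    rw [add_sub_cancel_left, Fin.val_one', Nat.mod_eq_of_lt (by omega)]
  have madj : ∀ (i k : ℕ), i ≤ m → k ≤ m → ((i = 0 ∧ k = 0) ∨ i + 1 = k ∨ k + 1 = i) →
      ∀ (j l : Fin n), (cycleGraph n).Adj j l →
        (Myc m (cycleGraph n)).Adj (vt i j) (vt k l) := by
    intro i k hi hk hik j l hjl
    show (cycleGraph n).Adj j l ∧ ((i % (m+1) = 0 ∧ k % (m+1) = 0)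
      ∨ i % (m+1) + 1 = k % (m+1) ∨ k % (m+1) + 1 = i % (m+1))
    rw [hmod i hi, hmod k hk]
    exact ⟨hjl, hik⟩
  have madjr : ∀ j : Fin n, (Myc m (cycleGraph n)).Adj (vt m j) none := by
    intro j
    show m % (m+1) = m
    exact hmod m le_rfl
  have vtne : ∀ (i k : ℕ) (j l : Fin n), i ≤ m → k ≤ m → (i ≠ k ∨ j ≠ l) → vt i j ≠ vt k l := by
    intro i k j l hi hk h he
    simp only [hvt, Option.some.injEq, Prod.mk.injEq, Fin.mk.injEq] at he
    rcases h with h | h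
    · exact h (by rw [← hmod i hi, ← hmod k hk]; exact he.1)
    · exact h he.2
  have hne2 : ∀ j : Fin n, j ≠ j + 1 + 1 := by
    intro j he
    have hv : ((1 + 1 : Fin n)).val = 2 := by
      rw [Fin.add_def]
      simp only [Fin.val_one']
      rw [Nat.mod_eq_of_lt (show 1 < n by omega)]
      rw [Nat.mod_eq_of_lt (show 1 + 1 < n by omega)]
    rw [add_assoc] at he
    have h0 : (1 + 1 : Fin n) = 0 := left_eq_add.mp he
    rw [h0] at hv
    simp at hv
  have shift1 : ∀ F : Fin n → ℤ, (∑ j : Fin n, F (j + 1)) = ∑ j : Fin n, F j := by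
    intro F
    simpa using Equiv.sum_comp (Equiv.addRight (1 : Fin n)) F
  set lam : ℤ := ∑ j : Fin n, ω (vt 0 j) (vt 0 (j + 1)) with hlam
  have claimA : (∑ j : Fin n, (ω (vt 0 j) (vt (0+1) (j + 1))
      + ω (vt (0+1) (j + 1)) (vt 0 (j + 1 + 1)))) = 2 * lam := by
    have step : ∀ j : Fin n, ω (vt 0 j) (vt (0+1) (j+1)) + ω (vt (0+1) (j+1)) (vt 0 (j+1+1))
        = ω (vt 0 j) (vt 0 (j+1)) + ω (vt 0 (j+1)) (vt 0 (j+1+1)) := by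
      intro j
      have hab : (Myc m (cycleGraph n)).Adj (vt 0 j) (vt 0 (j+1)) :=
        madj 0 0 (by omega) (by omega) (by omega) _ _ (cadj j)
      have hbc : (Myc m (cycleGraph n)).Adj (vt 0 (j+1)) (vt 0 (j+1+1)) :=
        madj 0 0 (by omega) (by omega) (by omega) _ _ (cadj (j+1))
      have hcd : (Myc m (cycleGraph n)).Adj (vt 0 (j+1+1)) (vt (0+1) (j+1)) :=
        madj 0 (0+1) (by omega) (by omega) (by omega) _ _ (cadj (j+1)).symm
      have hda : (Myc m (cycleGraph n)).Adj (vt (0+1) (j+1)) (vt 0 j) :=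
        madj (0+1) 0 (by omega) (by omega) (by omega) _ _ (cadj j).symm
      have h := sq _ _ _ _ hab hbc hcd hda
        (vtne 0 0 _ _ (by omega) (by omega) (Or.inr (hne2 j)))
        (vtne 0 (0+1) _ _ (by omega) (by omega) (Or.inl (by omega)))
      have a1 := ωanti _ _ hcd
      have a2 := ωanti _ _ hda
      omega
    calc (∑ j : Fin n, (ω (vt 0 j) (vt (0+1) (j+1)) + ω (vt (0+1) (j+1)) (vt 0 (j+1+1))))
        = ∑ j : Fin n, (ω (vt 0 j) (vt 0 (j+1)) + ω (vt 0 (j+1)) (vt 0 (j+1+1))) :=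
          Finset.sum_congr rfl (fun j _ => step j)
      _ = (∑ j : Fin n, ω (vt 0 j) (vt 0 (j+1))) + ∑ j : Fin n, ω (vt 0 (j+1)) (vt 0 (j+1+1)) :=
          Finset.sum_add_distrib
      _ = lam + lam := by
          have s1 : (∑ j : Fin n, ω (vt 0 (j+1)) (vt 0 (j+1+1)))
              = ∑ j : Fin n, ω (vt 0 j) (vt 0 (j+1)) := shift1 (fun x => ω (vt 0 x) (vt 0 (x+1)))
          rw [s1, hlam]
      _ = 2 * lam := by ring
  have claimB : ∀ i : ℕ, i + 1 + 1 ≤ m →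
      (∑ j : Fin n, (ω (vt (i+1) j) (vt (i+1+1) (j + 1))
        + ω (vt (i+1+1) (j + 1)) (vt (i+1) (j + 1 + 1))))
      = ∑ j : Fin n, (ω (vt i j) (vt (i+1) (j + 1)) + ω (vt (i+1) (j + 1)) (vt i (j + 1 + 1))) := by
    intro i him
    have step : ∀ j : Fin n,
        ω (vt (i+1) j) (vt (i+1+1) (j+1)) + ω (vt (i+1+1) (j+1)) (vt (i+1) (j+1+1))
        = ω (vt (i+1) j) (vt i (j+1)) + ω (vt i (j+1)) (vt (i+1) (j+1+1)) := by
      intro j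
      have hab : (Myc m (cycleGraph n)).Adj (vt (i+1) j) (vt i (j+1)) :=
        madj (i+1) i (by omega) (by omega) (by omega) _ _ (cadj j)
      have hbc : (Myc m (cycleGraph n)).Adj (vt i (j+1)) (vt (i+1) (j+1+1)) :=
        madj i (i+1) (by omega) (by omega) (by omega) _ _ (cadj (j+1))
      have hcd : (Myc m (cycleGraph n)).Adj (vt (i+1) (j+1+1)) (vt (i+1+1) (j+1)) :=
        madj (i+1) (i+1+1) (by omega) (by omega) (by omega) _ _ (cadj (j+1)).symm
      have hda : (Myc m (cycleGraph n)).Adj (vt (i+1+1) (j+1)) (vt (i+1) j) :=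
        madj (i+1+1) (i+1) (by omega) (by omega) (by omega) _ _ (cadj j).symm
      have h := sq _ _ _ _ hab hbc hcd hda
        (vtne (i+1) (i+1) _ _ (by omega) (by omega) (Or.inr (hne2 j)))
        (vtne i (i+1+1) _ _ (by omega) (by omega) (Or.inl (by omega)))
      have a1 := ωanti _ _ hcd
      have a2 := ωanti _ _ hda
      omega
    have sA : (∑ j : Fin n, ω (vt (i+1) (j+1)) (vt i (j+1+1)))
        = ∑ j : Fin n, ω (vt (i+1) j) (vt i (j+1)) := shift1 (fun x => ω (vt (i+1) x) (vt i (x+1)))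
    have sB : (∑ j : Fin n, ω (vt i (j+1)) (vt (i+1) (j+1+1)))
        = ∑ j : Fin n, ω (vt i j) (vt (i+1) (j+1)) := shift1 (fun x => ω (vt i x) (vt (i+1) (x+1)))
    calc (∑ j : Fin n, (ω (vt (i+1) j) (vt (i+1+1) (j+1))
          + ω (vt (i+1+1) (j+1)) (vt (i+1) (j+1+1))))
        = ∑ j : Fin n, (ω (vt (i+1) j) (vt i (j+1)) + ω (vt i (j+1)) (vt (i+1) (j+1+1))) :=
          Finset.sum_congr rfl (fun j _ => step j)
      _ = (∑ j : Fin n, ω (vt (i+1) j) (vt i (j+1)))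
          + ∑ j : Fin n, ω (vt i (j+1)) (vt (i+1) (j+1+1)) := Finset.sum_add_distrib
      _ = (∑ j : Fin n, ω (vt (i+1) (j+1)) (vt i (j+1+1)))
          + ∑ j : Fin n, ω (vt i j) (vt (i+1) (j+1)) := by rw [sA, sB]
      _ = ∑ j : Fin n, (ω (vt i j) (vt (i+1) (j + 1)) + ω (vt (i+1) (j + 1)) (vt i (j + 1 + 1))) := by
          rw [Finset.sum_add_distrib]
          ring
  have claimC : ∀ i : ℕ, i + 1 = m →
      (∑ j : Fin n, (ω (vt i j) (vt (i+1) (j + 1)) + ω (vt (i+1) (j + 1)) (vt i (j + 1 + 1)))) = 0 := by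
    intro i him
    have step : ∀ j : Fin n,
        ω (vt (i+1) j) (vt i (j+1)) + ω (vt i (j+1)) (vt (i+1) (j+1+1))
        = - ω none (vt (i+1) j) + ω none (vt (i+1) (j+1+1)) := by
      intro j
      have hab : (Myc m (cycleGraph n)).Adj (vt (i+1) j) (vt i (j+1)) :=
        madj (i+1) i (by omega) (by omega) (by omega) _ _ (cadj j)
      have hbc : (Myc m (cycleGraph n)).Adj (vt i (j+1)) (vt (i+1) (j+1+1)) :=
        madj i (i+1) (by omega) (by omega) (by omega) _ _ (cadj (j+1))
      have hcd : (Myc m (cycleGraph n)).Adj (vt (i+1) (j+1+1)) none := by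
        rw [him]
        exact madjr _
      have hda : (Myc m (cycleGraph n)).Adj none (vt (i+1) j) := by
        rw [him]
        exact (madjr _).symm
      have hbd2 : vt i (j+1) ≠ none := by
        simp [hvt]
      have h := sq _ _ _ _ hab hbc hcd hda
        (vtne (i+1) (i+1) _ _ (by omega) (by omega) (Or.inr (hne2 j))) hbd2
      have a1 := ωanti _ _ hcd
      have a2 := ωanti _ _ hda
      omega
    have sA : (∑ j : Fin n, ω (vt (i+1) (j+1)) (vt i (j+1+1)))
        = ∑ j : Fin n, ω (vt (i+1) j) (vt i (j+1)) := shift1 (fun x => ω (vt (i+1) x) (vt i (x+1)))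
    have sB : (∑ j : Fin n, ω (vt i (j+1)) (vt (i+1) (j+1+1)))
        = ∑ j : Fin n, ω (vt i j) (vt (i+1) (j+1)) := shift1 (fun x => ω (vt i x) (vt (i+1) (x+1)))
    have sC : (∑ j : Fin n, ω none (vt (i+1) (j+1+1))) = ∑ j : Fin n, ω none (vt (i+1) j) := by
      have t1 : (∑ j : Fin n, ω none (vt (i+1) (j+1+1)))
          = ∑ j : Fin n, ω none (vt (i+1) (j+1)) := shift1 (fun x => ω none (vt (i+1) (x+1)))
      have t2 : (∑ j : Fin n, ω none (vt (i+1) (j+1)))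
          = ∑ j : Fin n, ω none (vt (i+1) j) := shift1 (fun x => ω none (vt (i+1) x))
      rw [t1, t2]
    calc (∑ j : Fin n, (ω (vt i j) (vt (i+1) (j + 1)) + ω (vt (i+1) (j + 1)) (vt i (j + 1 + 1))))
        = (∑ j : Fin n, ω (vt i j) (vt (i+1) (j+1)))
          + ∑ j : Fin n, ω (vt (i+1) (j+1)) (vt i (j+1+1)) := Finset.sum_add_distrib
      _ = (∑ j : Fin n, ω (vt i (j+1)) (vt (i+1) (j+1+1)))
          + ∑ j : Fin n, ω (vt (i+1) j) (vt i (j+1)) := by rw [sA, sB]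
      _ = ∑ j : Fin n, (ω (vt (i+1) j) (vt i (j+1)) + ω (vt i (j+1)) (vt (i+1) (j+1+1))) := by
          rw [Finset.sum_add_distrib]
          ring
      _ = ∑ j : Fin n, (- ω none (vt (i+1) j) + ω none (vt (i+1) (j+1+1))) :=
          Finset.sum_congr rfl (fun j _ => step j)
      _ = 0 := by
          rw [Finset.sum_add_distrib, Finset.sum_neg_distrib, sC]
          ring
  have chain : ∀ k : ℕ, k + 1 ≤ m →
      (∑ j : Fin n, (ω (vt k j) (vt (k+1) (j + 1)) + ω (vt (k+1) (j + 1)) (vt k (j + 1 + 1))))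
        = 2 * lam := by
    intro k
    induction k with
    | zero => intro _; exact claimA
    | succ k ih =>
      intro hk
      rw [claimB k (by omega)]
      exact ih (by omega)
  have hzero : (2:ℤ) * lam = 0 := by
    rw [← chain (m-1) (by omega)]
    exact claimC (m-1) (by omega)
  have hlamzero : lam = 0 := by omega
  have hterm : ∀ j : Fin n, ((ω (vt 0 j) (vt 0 (j + 1)) : ℤ) : ZMod 2) = 1 := by
    intro j
    by_cases h : D (vt 0 j) (vt 0 (j + 1))
    · simp [hω, h]
    · rw [hω]
      simp only [h, if_false]
      decide
  have hcast : ((lam : ℤ) : ZMod 2) = 1 := by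
    rw [hlam]
    push_cast
    rw [Finset.sum_congr rfl (fun j (_ : j ∈ Finset.univ) => hterm j), Finset.sum_const,
      Finset.card_univ, Fintype.card_fin, nsmul_eq_mul, mul_one]
    rw [← ZMod.natCast_mod n 2, hodd]
    norm_num
  rw [hlamzero] at hcast
  simp at hcast

end MycielskiAux

/-- For `s > 1` and `m ≥ 1`, the circular chromatic number of `M_m(C_{2s+1})` equals `4`. -/
theorem circChrom_myc_odd_cycle (m s : ℕ) (hm : 1 ≤ m) (hs : 1 < s) :
    (SimpleGraph.Myc m (cycleGraph (2 * s + 1))).circChrom = 4 := by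
  have hn : 5 ≤ 2 * s + 1 := by omega
  have hodd : (2 * s + 1) % 2 = 1 := by omega
  obtain ⟨D0, hD0, hub⟩ := MycielskiAux.myc_upper m (2 * s + 1) hm hn hodd
  have hlow := fun D hD => MycielskiAux.myc_lower m (2 * s + 1) hm hn hodd D hD
  unfold SimpleGraph.circChrom
  apply le_antisymm
  · refine le_trans (csInf_le ?_ ?_) hub
    · refine ⟨4, ?_⟩
      rintro x ⟨D, hD, rfl⟩
      exact hlow D hD
    · exact ⟨D0, hD0, rfl⟩
  · refine le_csInf ⟨_, D0, hD0, rfl⟩ ?_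
    rintro x ⟨D, hD, rfl⟩
    exact hlow D hD
end
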